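/- arXiv:1108.2967 — 7 statements merged into one kernel-verified Lean document; each statement's English description precedes it below -/
import Mathlib

section
/- Let n ≥ 2, a ∈ Bⁿ with 0 < |a| < 1, and x ∈ Bⁿ. Then (1+|x|)/(1+|T_a(x)|) ≤ 1+|a|. -/
open Metric Set Real Filter

/-- `x* = x / |x|²`, the inversion in the unit sphere (with junk value `0* = 0`). -/
noncomputable def invPt {E : Type*} [NormedAddCommGroup E] [InnerProductSpace ℝ E] (x : E) : E :=
  (‖x‖ ^ 2)⁻¹ • x

/-- Inversion `σ_a(x) = a* + r² (x - a*)*` in the sphere `S^{n-1}(a*, r)`, `r² = |a|⁻² - 1`. -/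
noncomputable def sigmaMap {E : Type*} [NormedAddCommGroup E] [InnerProductSpace ℝ E]
    (a x : E) : E :=
  invPt a + ((‖a‖ ^ 2)⁻¹ - 1) • invPt (x - invPt a)

/-- Reflection `p_a` in the hyperplane through the origin orthogonal to `a`. -/
noncomputable def reflMap {E : Type*} [NormedAddCommGroup E] [InnerProductSpace ℝ E]
    (a x : E) : E :=
  x - ((2 * (inner ℝ x a : ℝ) / ‖a‖ ^ 2) : ℝ) • a

open Classical in
/-- The Möbius transformation `T_a = p_a ∘ σ_a` of the unit ball onto itself with `T_a a = 0`,
with `T_0 = id`. -/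
noncomputable def TMap {E : Type*} [NormedAddCommGroup E] [InnerProductSpace ℝ E]
    (a : E) (x : E) : E :=
  if a = 0 then x else reflMap a (sigmaMap a x)

lemma refl_norm {E : Type*} [NormedAddCommGroup E] [InnerProductSpace ℝ E]
    (a : E) (ha : a ≠ 0) (y : E) : ‖reflMap a y‖ = ‖y‖ := by
  have hα : ‖a‖ ^ 2 ≠ 0 := pow_ne_zero 2 (norm_ne_zero_iff.mpr ha)
  have hsq : ‖reflMap a y‖ ^ 2 = ‖y‖ ^ 2 := by
    rw [reflMap, norm_sub_sq_real, real_inner_smul_right, norm_smul, mul_pow,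
      Real.norm_eq_abs, sq_abs]
    field_simp
    ring
  calc ‖reflMap a y‖ = Real.sqrt (‖reflMap a y‖ ^ 2) := (Real.sqrt_sq (norm_nonneg _)).symm
    _ = Real.sqrt (‖y‖ ^ 2) := by rw [hsq]
    _ = ‖y‖ := Real.sqrt_sq (norm_nonneg _)



private lemma sigma_alg (α s ξ D : ℝ) (hα : α ≠ 0) (hD : D ≠ 0)
    (hDval : D = ξ - 2 * (α⁻¹ * s) + α⁻¹) :
    (α⁻¹ + 2 * ((α⁻¹ - 1) * D⁻¹) * (α⁻¹ * s - α⁻¹) + ((α⁻¹ - 1) * D⁻¹) ^ 2 * D)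
      * (1 - 2 * s + ξ * α) = ξ - 2 * s + α := by
  have h1 : α * D = α * ξ - 2 * s + 1 := by rw [hDval]; field_simp
  have h2 : 1 - 2 * s + ξ * α = α * D := by linarith
  rw [h2]
  field_simp
  linear_combination h1

lemma sigma_norm_sq {E : Type*} [NormedAddCommGroup E] [InnerProductSpace ℝ E]
    {a x : E} (ha : a ≠ 0) (hd : x - invPt a ≠ 0) :
    ‖sigmaMap a x‖ ^ 2 * (1 - 2 * (inner ℝ x a : ℝ) + ‖x‖ ^ 2 * ‖a‖ ^ 2) = ‖x - a‖ ^ 2 := by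
  have hα : (‖a‖ : ℝ) ^ 2 ≠ 0 := pow_ne_zero 2 (norm_ne_zero_iff.mpr ha)
  have hD : (‖x - invPt a‖ : ℝ) ^ 2 ≠ 0 := pow_ne_zero 2 (norm_ne_zero_iff.mpr hd)
  have hia : (inner ℝ x (invPt a) : ℝ) = (‖a‖ ^ 2)⁻¹ * inner ℝ x a := by
    rw [invPt, real_inner_smul_right]
  have hna : ‖invPt a‖ ^ 2 = (‖a‖ ^ 2)⁻¹ := by
    rw [invPt, norm_smul, mul_pow, Real.norm_eq_abs, sq_abs]
    field_simp
  have hDval : ‖x - invPt a‖ ^ 2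
      = ‖x‖ ^ 2 - 2 * ((‖a‖ ^ 2)⁻¹ * inner ℝ x a) + (‖a‖ ^ 2)⁻¹ := by
    rw [norm_sub_sq_real, hia, hna]
  have hiad : (inner ℝ (invPt a) (x - invPt a) : ℝ)
      = (‖a‖ ^ 2)⁻¹ * inner ℝ x a - (‖a‖ ^ 2)⁻¹ := by
    rw [inner_sub_right, real_inner_self_eq_norm_sq, hna, real_inner_comm, hia]
  have hsigma : ‖sigmaMap a x‖ ^ 2
      = (‖a‖ ^ 2)⁻¹ + 2 * (((‖a‖ ^ 2)⁻¹ - 1) * ((‖x - invPt a‖ ^ 2)⁻¹))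
          * ((‖a‖ ^ 2)⁻¹ * inner ℝ x a - (‖a‖ ^ 2)⁻¹)
        + (((‖a‖ ^ 2)⁻¹ - 1) * ((‖x - invPt a‖ ^ 2)⁻¹)) ^ 2 * ‖x - invPt a‖ ^ 2 := by
    have hinv : invPt (x - invPt a) = ((‖x - invPt a‖ ^ 2)⁻¹ : ℝ) • (x - invPt a) := rfl
    rw [sigmaMap, norm_add_sq_real, hna, hinv, smul_smul,
      real_inner_smul_right, hiad, norm_smul, mul_pow, Real.norm_eq_abs, sq_abs]
    ring
  have hxa : ‖x - a‖ ^ 2 = ‖x‖ ^ 2 - 2 * inner ℝ x a + ‖a‖ ^ 2 := norm_sub_sq_real x a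
  rw [hsigma, hxa]
  exact sigma_alg (‖a‖ ^ 2) (inner ℝ x a) (‖x‖ ^ 2) (‖x - invPt a‖ ^ 2) hα hD hDval


set_option maxHeartbeats 1000000 in
/-- `(1 + |x|) / (1 + |T_a(x)|) ≤ 1 + |a|`. -/
theorem one_add_norm_div_TMap_le {n : ℕ} (hn : 2 ≤ n)
    (a : EuclideanSpace ℝ (Fin n)) (ha0 : 0 < ‖a‖) (ha1 : ‖a‖ < 1)
    (x : EuclideanSpace ℝ (Fin n)) (hx : x ∈ ball (0 : EuclideanSpace ℝ (Fin n)) 1) :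
    (1 + ‖x‖) / (1 + ‖TMap a x‖) ≤ 1 + ‖a‖ := by
  have ha : a ≠ 0 := fun h => by simp [h] at ha0
  have hX : ‖x‖ < 1 := mem_ball_zero_iff.mp hx
  have hinva : ‖invPt a‖ = ‖a‖⁻¹ := by
    rw [invPt, norm_smul, Real.norm_eq_abs, abs_of_nonneg (by positivity)]
    rw [pow_two]
    field_simp
  have hd : x - invPt a ≠ 0 := by
    intro h
    have hxe : x = invPt a := by rwa [sub_eq_zero] at h
    have h1 : (1 : ℝ) < ‖a‖⁻¹ := (one_lt_inv₀ ha0).mpr ha1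
    rw [hxe, hinva] at hX
    linarith
  have hTnorm : ‖TMap a x‖ = ‖sigmaMap a x‖ := by
    rw [TMap, if_neg ha]
    exact refl_norm a ha _
  have hkey : ‖TMap a x‖ ^ 2 * (1 - 2 * (inner ℝ x a : ℝ) + ‖x‖ ^ 2 * ‖a‖ ^ 2)
      = ‖x - a‖ ^ 2 := by
    rw [hTnorm]; exact sigma_norm_sq ha hd
  set t : ℝ := ‖TMap a x‖ with htdef
  set s : ℝ := (inner ℝ x a : ℝ) with hsdef
  have ht : 0 ≤ t := norm_nonneg _
  have hX0 : 0 ≤ ‖x‖ := norm_nonneg _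
  have hN0 : 0 ≤ ‖x - a‖ := norm_nonneg _
  have hcs : |s| ≤ ‖x‖ * ‖a‖ := abs_real_inner_le_norm x a
  have hcs1 : -(‖x‖ * ‖a‖) ≤ s := neg_le_of_abs_le hcs
  have hcs2 : s ≤ ‖x‖ * ‖a‖ := le_of_abs_le hcs
  have hxa2 : ‖x - a‖ ^ 2 = ‖x‖ ^ 2 - 2 * s + ‖a‖ ^ 2 := by
    rw [norm_sub_sq_real]
  have hd1 : ‖x‖ - ‖a‖ ≤ ‖x - a‖ := norm_sub_norm_le x a
  have h1t : (0 : ℝ) < 1 + t := by linarith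
  rw [div_le_iff₀ h1t]
  have hTge : ‖x‖ - ‖a‖ ≤ t * (1 + ‖a‖) := by
    rcases le_or_gt ‖x‖ ‖a‖ with hc | hc
    · nlinarith
    · have h2 : ‖x - a‖ ^ 2 ≤ (t * (1 + ‖a‖)) ^ 2 := by
        nlinarith [mul_nonneg (sq_nonneg t) (show (0:ℝ) ≤ s + ‖x‖ * ‖a‖ by linarith),
          mul_nonneg (sq_nonneg t) (show (0:ℝ) ≤ ‖a‖ - ‖x‖ * ‖a‖ by nlinarith),
          mul_nonneg (sq_nonneg t)
            (show (0:ℝ) ≤ ‖a‖ ^ 2 - ‖x‖ ^ 2 * ‖a‖ ^ 2 by nlinarith [mul_nonneg (show (0:ℝ) ≤ 1 - ‖x‖ ^ 2 by nlinarith) (sq_nonneg ‖a‖)])]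
      have h3 : (‖x‖ - ‖a‖) ^ 2 ≤ ‖x - a‖ ^ 2 := pow_le_pow_left₀ (by linarith) hd1 2
      have hT1 : 0 ≤ t * (1 + ‖a‖) := mul_nonneg ht (by linarith)
      nlinarith [h3.trans h2, hT1]
  nlinarith
end

section
/- Let n ≥ 2, a ∈ Bⁿ with 0 < |a| < 1, and x ∈ Bⁿ. Then 1/(1−|x|) ≤ (1+|a|) · ‖T_a'(x)‖/(1−|T_a(x)|), where ‖T_a'(x)‖ denotes the operator norm of the (conformal) derivative of T_a at x. -/
open Metric Set Real Filter

section Helpers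

variable {E : Type*} [NormedAddCommGroup E] [InnerProductSpace ℝ E]

local notation "⟪" x ", " y "⟫" => @inner ℝ _ _ x y

/-- Reflection in the hyperplane orthogonal to `a`, as a continuous linear map. -/
noncomputable def reflCLM (a : E) : E →L[ℝ] E :=
  ContinuousLinearMap.id ℝ E - (2 * (‖a‖ ^ 2)⁻¹) • ((innerSL ℝ a).smulRight a)

lemma reflCLM_apply (a v : E) : reflCLM a v = v - (2 * (‖a‖ ^ 2)⁻¹ * ⟪a, v⟫) • a := by
  simp [reflCLM, smul_smul, mul_assoc]

lemma norm_reflCLM_apply (a : E) (ha : a ≠ 0) (v : E) : ‖reflCLM a v‖ = ‖v‖ := by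
  have hs : (‖a‖ : ℝ) ^ 2 ≠ 0 := pow_ne_zero 2 (norm_ne_zero_iff.mpr ha)
  have hsq : ‖reflCLM a v‖ ^ 2 = ‖v‖ ^ 2 := by
    rw [reflCLM_apply, @norm_sub_sq_real, real_inner_smul_right, norm_smul,
      real_inner_comm v a]
    rw [Real.norm_eq_abs, mul_pow, sq_abs]
    field_simp
    ring
  have h1 := Real.sqrt_sq (norm_nonneg (reflCLM a v))
  rw [← h1, hsq, Real.sqrt_sq (norm_nonneg v)]

lemma hasFDerivAt_normSq (y : E) :
    HasFDerivAt (fun z : E => (‖z‖ ^ 2 : ℝ)) (2 • (innerSL ℝ y)) y := by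
  simpa using (hasFDerivAt_id y).norm_sq

lemma hasFDerivAt_invPt (y : E) (hy : y ≠ 0) :
    HasFDerivAt (invPt : E → E) ((‖y‖ ^ 2)⁻¹ • reflCLM y) y := by
  have hs : (‖y‖ : ℝ) ^ 2 ≠ 0 := pow_ne_zero 2 (norm_ne_zero_iff.mpr hy)
  have h1 := (hasFDerivAt_inv' hs).comp y (hasFDerivAt_normSq y)
  have h2 := h1.smul (hasFDerivAt_id y)
  refine HasFDerivAt.congr_fderiv (f := invPt) h2 ?_
  ext v
  simp [reflCLM_apply, smul_smul, smul_sub, two_smul]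
  match_scalars <;> field_simp <;> ring

lemma norm_reflCLM (a : E) (ha : a ≠ 0) : ‖reflCLM a‖ = 1 := by
  have h0 : (0:ℝ) < ‖a‖ := norm_pos_iff.mpr ha
  refine le_antisymm (ContinuousLinearMap.opNorm_le_bound _ zero_le_one fun v => ?_) ?_
  · rw [norm_reflCLM_apply a ha, one_mul]
  · have h := (reflCLM a).le_opNorm a
    rw [norm_reflCLM_apply a ha] at h
    calc (1:ℝ) = ‖a‖ / ‖a‖ := by field_simp
    _ ≤ ‖reflCLM a‖ * ‖a‖ / ‖a‖ := by gcongr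
    _ = ‖reflCLM a‖ := by field_simp

lemma norm_reflCLM_comp (a : E) (ha : a ≠ 0) (D : E →L[ℝ] E) :
    ‖(reflCLM a).comp D‖ = ‖D‖ := by
  refine le_antisymm (ContinuousLinearMap.opNorm_le_bound _ (norm_nonneg D) fun v => ?_)
    (ContinuousLinearMap.opNorm_le_bound _ (norm_nonneg _) fun v => ?_)
  · rw [ContinuousLinearMap.comp_apply, norm_reflCLM_apply a ha]
    exact D.le_opNorm v
  · have h := ((reflCLM a).comp D).le_opNorm v
    rwa [ContinuousLinearMap.comp_apply, norm_reflCLM_apply a ha] at h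

lemma reflMap_eq_reflCLM (a v : E) : reflMap a v = reflCLM a v := by
  rw [reflMap, reflCLM_apply, real_inner_comm a v]
  congr 2
  ring

lemma norm_invPt (a : E) : ‖invPt a‖ = ‖a‖⁻¹ := by
  rcases eq_or_ne a 0 with rfl | ha
  · simp [invPt]
  · have h0 : (0:ℝ) < ‖a‖ := norm_pos_iff.mpr ha
    rw [invPt, norm_smul, Real.norm_eq_abs, abs_inv, abs_pow, abs_norm]
    rw [sq]
    field_simp

lemma hasFDerivAt_TMap (a : E) (ha : a ≠ 0) (x : E) (hy : x - invPt a ≠ 0) :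
    HasFDerivAt (TMap a)
      ((reflCLM a).comp ((((‖a‖ ^ 2)⁻¹ - 1) • ((‖x - invPt a‖ ^ 2)⁻¹ • reflCLM (x - invPt a))))) x := by
  have h0 : HasFDerivAt (fun z : E => z - invPt a) (ContinuousLinearMap.id ℝ E) x := by
    simpa using (hasFDerivAt_id x).sub_const (invPt a)
  have h1 := (hasFDerivAt_invPt (x - invPt a) hy).comp x h0
  rw [ContinuousLinearMap.comp_id] at h1
  have h2 := (h1.const_smul ((‖a‖ ^ 2)⁻¹ - 1)).const_add (invPt a)
  have h3 : HasFDerivAt (sigmaMap a)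
      (((‖a‖ ^ 2)⁻¹ - 1) • ((‖x - invPt a‖ ^ 2)⁻¹ • reflCLM (x - invPt a))) x := h2
  have h4 := ((reflCLM a).hasFDerivAt.comp x h3)
  have hT : TMap a = fun z => reflCLM a (sigmaMap a z) := by
    funext z
    rw [TMap, if_neg ha, reflMap_eq_reflCLM]
  rw [hT]
  exact h4

lemma norm_TMap (a x : E) (ha : a ≠ 0) : ‖TMap a x‖ = ‖sigmaMap a x‖ := by
  rw [TMap, if_neg ha, reflMap_eq_reflCLM, norm_reflCLM_apply a ha]

lemma one_sub_normSq_sigmaMap (a x : E) (ha : a ≠ 0) (hy : x - invPt a ≠ 0) :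
    1 - ‖sigmaMap a x‖ ^ 2
      = (((‖a‖ ^ 2)⁻¹ - 1) * (‖x - invPt a‖ ^ 2)⁻¹) * (1 - ‖x‖ ^ 2) := by
  have hs0 : (‖a‖:ℝ) ^ 2 ≠ 0 := pow_ne_zero 2 (norm_ne_zero_iff.mpr ha)
  have hy0 : (‖x - invPt a‖:ℝ) ^ 2 ≠ 0 := pow_ne_zero 2 (norm_ne_zero_iff.mpr hy)
  have hia : ⟪invPt a, x - invPt a⟫ = (‖a‖ ^ 2)⁻¹ * ⟪a, x⟫ - (‖a‖ ^ 2)⁻¹ := by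
    rw [invPt, inner_sub_right, real_inner_smul_left, real_inner_smul_left,
      real_inner_smul_right, real_inner_self_eq_norm_sq]
    field_simp
  have hQ : ‖x - invPt a‖ ^ 2 = ‖x‖ ^ 2 - 2 * ((‖a‖ ^ 2)⁻¹ * ⟪a, x⟫) + (‖a‖ ^ 2)⁻¹ := by
    rw [@norm_sub_sq_real, norm_invPt, invPt, real_inner_smul_right, real_inner_comm x a]
    field_simp
  have hinv : invPt (x - invPt a) = (‖x - invPt a‖ ^ 2)⁻¹ • (x - invPt a) := rfl
  have hσ : sigmaMap a x
      = invPt a + (((‖a‖ ^ 2)⁻¹ - 1) * (‖x - invPt a‖ ^ 2)⁻¹) • (x - invPt a) := by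
    rw [sigmaMap, hinv, smul_smul]
  rw [hσ, @norm_add_sq_real, real_inner_smul_right, hia, norm_smul, Real.norm_eq_abs,
    mul_pow, sq_abs, norm_invPt, inv_pow]
  have hQ0 : ‖x‖ ^ 2 - 2 * ((‖a‖ ^ 2)⁻¹ * ⟪a, x⟫) + (‖a‖ ^ 2)⁻¹ ≠ 0 := hQ ▸ hy0
  have huQ : ‖x - invPt a‖ ^ 2 * (‖x - invPt a‖ ^ 2)⁻¹ = 1 := mul_inv_cancel₀ hy0
  linear_combination (((‖a‖ ^ 2)⁻¹ - 1) - ((‖a‖ ^ 2)⁻¹ - 1) ^ 2 * (‖x - invPt a‖ ^ 2)⁻¹) * huQ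
    - (((‖a‖ ^ 2)⁻¹ - 1) * (‖x - invPt a‖ ^ 2)⁻¹) * hQ

end Helpers

set_option maxHeartbeats 1000000 in
/-- `1 / (1 - |x|) ≤ (1 + |a|) ‖T_a'(x)‖ / (1 - |T_a(x)|)`, where `‖T_a'(x)‖`
is the operator norm of the derivative of `T_a` at `x`. -/
theorem qh_density_TMap_bound {n : ℕ} (hn : 2 ≤ n)
    (a : EuclideanSpace ℝ (Fin n)) (ha0 : 0 < ‖a‖) (ha1 : ‖a‖ < 1)
    (x : EuclideanSpace ℝ (Fin n)) (hx : x ∈ ball (0 : EuclideanSpace ℝ (Fin n)) 1) :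
    1 / (1 - ‖x‖) ≤ (1 + ‖a‖) * (‖fderiv ℝ (TMap a) x‖ / (1 - ‖TMap a x‖)) := by
  classical
  have ha : a ≠ 0 := by
    intro h; rw [h, norm_zero] at ha0; exact lt_irrefl 0 ha0
  have hx1 : ‖x‖ < 1 := by simpa using mem_ball_zero_iff.mp hx
  have hX0 : (0:ℝ) ≤ ‖x‖ := norm_nonneg x
  have hT0 : (0:ℝ) ≤ ‖TMap a x‖ := norm_nonneg _
  have hainv : ‖a‖ * ‖a‖⁻¹ = 1 := mul_inv_cancel₀ (ne_of_gt ha0)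
  have h1a : 1 < ‖a‖⁻¹ := by nlinarith [inv_nonneg.mpr (le_of_lt ha0)]
  have hyl : ‖a‖⁻¹ - ‖x‖ ≤ ‖x - invPt a‖ := by
    have h := norm_sub_norm_le (invPt a) x
    rw [norm_invPt, norm_sub_rev] at h
    linarith
  have hynorm : (0:ℝ) < ‖x - invPt a‖ := by linarith
  have hy0 : x - invPt a ≠ 0 := norm_pos_iff.mp hynorm
  have hQpos : (0:ℝ) < ‖x - invPt a‖ ^ 2 := by positivity
  have hc : (0:ℝ) < (‖a‖ ^ 2)⁻¹ - 1 := by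
    have h2 : (0:ℝ) < ‖a‖ ^ 2 := by positivity
    have h3 : ‖a‖ ^ 2 * (‖a‖ ^ 2)⁻¹ = 1 := mul_inv_cancel₀ (ne_of_gt h2)
    nlinarith [inv_nonneg.mpr (le_of_lt h2)]
  -- the derivative and its norm
  have hD := hasFDerivAt_TMap a ha x hy0
  rw [hD.fderiv]
  have hnorm : ‖(reflCLM a).comp
      ((((‖a‖ ^ 2)⁻¹ - 1) • ((‖x - invPt a‖ ^ 2)⁻¹ • reflCLM (x - invPt a))))‖
      = ((‖a‖ ^ 2)⁻¹ - 1) * (‖x - invPt a‖ ^ 2)⁻¹ := by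
    rw [norm_reflCLM_comp a ha, smul_smul]
    rw [norm_smul (((‖a‖ ^ 2)⁻¹ - 1) * (‖x - invPt a‖ ^ 2)⁻¹) (reflCLM (x - invPt a)),
      norm_reflCLM (x - invPt a) hy0, Real.norm_eq_abs, mul_one,
      abs_of_nonneg (mul_nonneg hc.le (inv_nonneg.mpr hQpos.le))]
  rw [hnorm]
  -- scalar abbreviations
  set A := ‖a‖ with hA
  set X := ‖x‖ with hXd
  set T := ‖TMap a x‖ with hT
  set Q := ‖x - invPt a‖ ^ 2 with hQd
  set L := ((A ^ 2)⁻¹ - 1) * Q⁻¹ with hL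
  have hLpos : 0 < L := mul_pos hc (inv_pos.mpr hQpos)
  have hid : 1 - T ^ 2 = L * (1 - X ^ 2) := by
    rw [hT, norm_TMap a x ha]
    exact one_sub_normSq_sigmaMap a x ha hy0
  have hAX : 0 < 1 - A * X := by nlinarith
  have hQinv : Q * Q⁻¹ = 1 := mul_inv_cancel₀ (ne_of_gt hQpos)
  have hcA : ((A ^ 2)⁻¹ - 1) * A ^ 2 = 1 - A ^ 2 := by
    have h2 : (A:ℝ) ^ 2 ≠ 0 := by positivity
    field_simp
  have hAy : 1 - A * X ≤ A * ‖x - invPt a‖ := by nlinarith [hyl]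
  have h2 : (1 - A * X) ^ 2 ≤ A ^ 2 * Q := by
    rw [hQd]
    nlinarith [hAy, hAX]
  have h3 : L * (A ^ 2 * Q) = 1 - A ^ 2 := by
    rw [hL]
    linear_combination ((A ^ 2)⁻¹ - 1) * A ^ 2 * hQinv + hcA
  have hL2 : L * (1 - A * X) ^ 2 ≤ 1 - A ^ 2 := by
    nlinarith [mul_nonneg hLpos.le (sub_nonneg.mpr h2)]
  have h1X2 : (0:ℝ) ≤ 1 - X ^ 2 := by nlinarith
  have hT2' : (X - A) ^ 2 ≤ T ^ 2 * (1 - A * X) ^ 2 := by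
    have e2 : T ^ 2 * (1 - A * X) ^ 2 - (X - A) ^ 2
        = (1 - X ^ 2) * ((1 - A ^ 2) - L * (1 - A * X) ^ 2) := by
      linear_combination (-(1 - A * X) ^ 2) * hid
    nlinarith [mul_nonneg h1X2 (sub_nonneg.mpr hL2)]
  have key : 1 + X ≤ (1 + A) * (1 + T) := by
    rcases le_or_gt X A with h | h
    · nlinarith
    · have hTlb : X - A ≤ T * (1 - A * X) := by
        nlinarith [mul_nonneg hT0 hAX.le, hT2']
      nlinarith [mul_nonneg (mul_nonneg hT0 ha0.le) (by linarith : (0:ℝ) ≤ 1 + X)]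
  have h1T : 0 < 1 - T := by
    nlinarith [mul_pos hLpos (lt_of_lt_of_le (by nlinarith : (0:ℝ) < 1 - X ^ 2) le_rfl)]
  have h1X : 0 < 1 - X := by linarith
  have goal2 : 1 - T ≤ (1 + A) * L * (1 - X) := by
    nlinarith [mul_nonneg h1T.le (sub_nonneg.mpr key), hid]
  rw [div_le_iff₀ h1X]
  rw [div_eq_mul_inv]
  have hTinv : (1 - T) * (1 - T)⁻¹ = 1 := mul_inv_cancel₀ (ne_of_gt h1T)
  have hTinvpos : 0 < (1 - T)⁻¹ := inv_pos.mpr h1T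
  nlinarith [mul_le_mul_of_nonneg_right goal2 hTinvpos.le]
end

section
/- Let n ≥ 2 and a ∈ Bⁿ with 0 < |a| < 1. For t > 0 small enough that (1+t)a ∈ Bⁿ and t|a| < 1−|a|, one has k_{Bⁿ}(a,(1+t)a) = log(1 + t|a|/(1−|a|−t|a|)) and k_{Bⁿ}(T_a(a), T_a((1+t)a)) = log(1 + t|a|/(1−t|a|−(1+t)|a|²)), and consequently lim_{t→0+} k_{Bⁿ}(T_a(a),T_a((1+t)a))/k_{Bⁿ}(a,(1+t)a) = 1/(1+|a|). -/
open Metric Set Real Filter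

/-- Conformal-type distance: infimum of weighted lengths of C¹ curves in `D` joining `x` to `y`. -/
noncomputable def confDist {E : Type*} [NormedAddCommGroup E] [NormedSpace ℝ E]
    (ρ : E → ℝ) (D : Set E) (x y : E) : ℝ :=
  sInf { L : ℝ | ∃ γ : ℝ → E, ContDiffOn ℝ 1 γ (Icc 0 1) ∧ γ 0 = x ∧ γ 1 = y ∧
    (∀ t ∈ Icc (0:ℝ) 1, γ t ∈ D) ∧
    L = ∫ t in (0:ℝ)..1, ρ (γ t) * ‖derivWithin γ (Icc 0 1) t‖ }

/-- Quasihyperbolic distance in `D`, with density `1 / d(z, ∂D)`. -/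
noncomputable def qhDist {E : Type*} [NormedAddCommGroup E] [NormedSpace ℝ E]
    (D : Set E) (x y : E) : ℝ :=
  confDist (fun z => (infDist z (frontier D))⁻¹) D x y

lemma infDist_sphere_of_norm_le {E : Type*} [NormedAddCommGroup E] [NormedSpace ℝ E]
    [Nontrivial E] {z : E} (hz : ‖z‖ ≤ 1) : infDist z (sphere (0:E) 1) = 1 - ‖z‖ := by
  have hne : (sphere (0:E) 1).Nonempty := NormedSpace.sphere_nonempty.mpr zero_le_one
  apply le_antisymm
  · rcases eq_or_ne z 0 with h | h
    · obtain ⟨w, hw⟩ := hne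
      have h1 : dist z w = 1 := by
        rw [h, dist_comm, dist_zero_right]; exact mem_sphere_zero_iff_norm.mp hw
      have h2 := (infDist_le_dist_of_mem (x := z) hw).trans h1.le
      rw [h] at h2 ⊢
      simpa using h2
    · have hzn : (0:ℝ) < ‖z‖ := norm_pos_iff.mpr h
      have hw : (‖z‖⁻¹ • z) ∈ sphere (0:E) 1 := by
        simp [norm_smul, abs_of_pos (inv_pos.mpr hzn), inv_mul_cancel₀ hzn.ne']
      have h2 := infDist_le_dist_of_mem (x := z) hw
      have hd : dist z (‖z‖⁻¹ • z) = 1 - ‖z‖ := by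
        have h3 : z - ‖z‖⁻¹ • z = (1 - ‖z‖⁻¹) • z := by
          rw [sub_smul, one_smul]
        have h4 : (1:ℝ) ≤ ‖z‖⁻¹ := (one_le_inv₀ hzn).mpr hz
        rw [dist_eq_norm, h3, norm_smul, Real.norm_eq_abs,
          abs_of_nonpos (by linarith)]
        field_simp
        ring
      linarith
  · by_contra hlt
    push_neg at hlt
    obtain ⟨w, hw, hd⟩ := (infDist_lt_iff hne).mp hlt
    have h1 : ‖w‖ = 1 := mem_sphere_zero_iff_norm.mp hw
    have h2 : ‖w‖ - ‖z‖ ≤ ‖w - z‖ := norm_sub_norm_le w z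
    rw [dist_eq_norm, ← norm_neg, neg_sub] at hd
    linarith


lemma qh_radial {E : Type*} [NormedAddCommGroup E] [InnerProductSpace ℝ E] [Nontrivial E]
    (u : E) (hu : ‖u‖ = 1) {r s : ℝ} (h0 : 0 ≤ r) (hrs : r ≤ s) (hs : s < 1) :
    qhDist (ball (0:E) 1) (r • u) (s • u) = Real.log ((1 - r) / (1 - s)) := by
  have h1r : (0:ℝ) < 1 - s := by linarith
  have hfr : frontier (ball (0:E) 1) = sphere 0 1 := frontier_ball 0 one_ne_zero
  have hρ : ∀ z : E, ‖z‖ < 1 → (infDist z (frontier (ball (0:E) 1)))⁻¹ = (1 - ‖z‖)⁻¹ := by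
    intro z hz; rw [hfr, infDist_sphere_of_norm_le hz.le]
  set S := { L : ℝ | ∃ γ : ℝ → E, ContDiffOn ℝ 1 γ (Icc 0 1) ∧ γ 0 = r • u ∧ γ 1 = s • u ∧
    (∀ t ∈ Icc (0:ℝ) 1, γ t ∈ ball (0:E) 1) ∧
    L = ∫ t in (0:ℝ)..1, (infDist (γ t) (frontier (ball (0:E) 1)))⁻¹ *
      ‖derivWithin γ (Icc 0 1) t‖ } with hSdef
  have hqh : qhDist (ball (0:E) 1) (r • u) (s • u) = sInf S := rfl
  -- scalar path
  set c : ℝ → ℝ := fun τ => r + τ * (s - r) with hc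
  have hcb : ∀ τ ∈ Icc (0:ℝ) 1, 0 ≤ c τ ∧ c τ ≤ s := by
    intro τ hτ
    simp only [hc]
    constructor <;> nlinarith [hτ.1, hτ.2]
  -- the linear curve
  set γ₀ : ℝ → E := fun τ => c τ • u with hγ₀
  have hγ₀c : ContDiffOn ℝ 1 γ₀ (Icc 0 1) := by
    exact ((contDiff_const.add (contDiff_id.mul contDiff_const)).smul contDiff_const).contDiffOn
  have hγ₀0 : γ₀ 0 = r • u := by simp [hγ₀, hc]
  have hγ₀1 : γ₀ 1 = s • u := by simp [hγ₀, hc]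
  have hγ₀n : ∀ τ ∈ Icc (0:ℝ) 1, ‖γ₀ τ‖ = c τ := by
    intro τ hτ
    rw [hγ₀, norm_smul, hu, mul_one, Real.norm_eq_abs, abs_of_nonneg (hcb τ hτ).1]
  have hγ₀b : ∀ τ ∈ Icc (0:ℝ) 1, γ₀ τ ∈ ball (0:E) 1 := by
    intro τ hτ
    rw [mem_ball_zero_iff, hγ₀n τ hτ]
    linarith [(hcb τ hτ).2]
  have hγ₀d : ∀ τ ∈ Icc (0:ℝ) 1, derivWithin γ₀ (Icc 0 1) τ = (s - r) • u := by
    intro τ hτ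
    have h1 : HasDerivAt c (s - r) τ := by
      simpa [hc] using ((hasDerivAt_id τ).mul_const (s - r)).const_add r
    exact ((h1.smul_const u).hasDerivWithinAt).derivWithin (uniqueDiffOn_Icc one_pos τ hτ)
  -- the integral of the linear curve
  have hint : (∫ τ in (0:ℝ)..1, (infDist (γ₀ τ) (frontier (ball (0:E) 1)))⁻¹ *
      ‖derivWithin γ₀ (Icc 0 1) τ‖) = Real.log ((1 - r) / (1 - s)) := by
    have hcong : EqOn (fun τ => (infDist (γ₀ τ) (frontier (ball (0:E) 1)))⁻¹ *
        ‖derivWithin γ₀ (Icc 0 1) τ‖) (fun τ => (s - r) / (1 - c τ)) (uIcc (0:ℝ) 1) := by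
      intro τ hτ
      rw [uIcc_of_le zero_le_one] at hτ
      have hn := hγ₀n τ hτ
      have hlt : ‖γ₀ τ‖ < 1 := by rw [hn]; linarith [(hcb τ hτ).2]
      simp only [hρ _ hlt, hγ₀d τ hτ, hn, norm_smul, hu, mul_one, Real.norm_eq_abs,
        abs_of_nonneg (by linarith : (0:ℝ) ≤ s - r)]
      rw [inv_mul_eq_div]
    rw [intervalIntegral.integral_congr hcong]
    have hderiv : ∀ τ ∈ uIcc (0:ℝ) 1,
        HasDerivAt (fun τ => -Real.log (1 - c τ)) ((s - r) / (1 - c τ)) τ := by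
      intro τ hτ
      rw [uIcc_of_le zero_le_one] at hτ
      have hpos : (0:ℝ) < 1 - c τ := by linarith [(hcb τ hτ).2]
      have h0' : HasDerivAt c (s - r) τ := by
        simpa [hc] using ((hasDerivAt_id τ).mul_const (s - r)).const_add r
      have h1 : HasDerivAt (fun τ => 1 - c τ) (-(s - r)) τ := by
        simpa using h0'.const_sub 1
      have h2 := (h1.log hpos.ne').neg
      rw [show -(-(s - r) / (1 - c τ)) = (s - r) / (1 - c τ) by ring] at h2
      exact h2
    have hci : IntervalIntegrable (fun τ => (s - r) / (1 - c τ)) MeasureTheory.volume 0 1 := by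
      apply ContinuousOn.intervalIntegrable
      apply continuousOn_const.div
      · have : Continuous fun τ : ℝ => 1 - c τ := by
          simp only [hc]; fun_prop
        exact this.continuousOn
      · intro τ hτ
        rw [uIcc_of_le zero_le_one] at hτ
        have h2 := (hcb τ hτ).2
        intro h; rw [sub_eq_zero] at h; linarith
    rw [intervalIntegral.integral_eq_sub_of_hasDerivAt hderiv hci]
    have e0 : c 0 = r := by simp [hc]
    have e1 : c 1 = s := by simp [hc]
    rw [e0, e1, Real.log_div (by linarith) (by linarith)]
    ring
  have hmem : Real.log ((1 - r) / (1 - s)) ∈ S :=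
    ⟨γ₀, hγ₀c, hγ₀0, hγ₀1, hγ₀b, hint.symm⟩
  have hbdd : BddBelow S := by
    refine ⟨0, fun L hL => ?_⟩
    obtain ⟨γ, hγ, hγ0, hγ1, hγb, hLeq⟩ := hL
    rw [hLeq]
    apply intervalIntegral.integral_nonneg zero_le_one
    intro τ hτ
    exact mul_nonneg (inv_nonneg.mpr infDist_nonneg) (norm_nonneg _)
  rw [hqh]
  apply le_antisymm (csInf_le hbdd hmem)
  apply le_csInf ⟨_, hmem⟩
  rintro L ⟨γ, hγ, hγ0, hγ1, hγb, hLeq⟩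
  set g : ℝ → E := derivWithin γ (Icc 0 1) with hg
  have hγd : ∀ τ ∈ Icc (0:ℝ) 1, HasDerivWithinAt γ (g τ) (Icc 0 1) τ :=
    fun τ hτ => ((hγ.differentiableOn one_ne_zero) τ hτ).hasDerivWithinAt
  have hgc : ContinuousOn g (Icc 0 1) :=
    hγ.continuousOn_derivWithin (uniqueDiffOn_Icc one_pos) le_rfl
  have hγc : ContinuousOn γ (Icc 0 1) := hγ.continuousOn
  set h : ℝ → ℝ := fun τ => (inner ℝ (γ τ) u : ℝ) with hh
  have hhc : ContinuousOn h (Icc 0 1) := hγc.inner continuousOn_const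
  have hγlt : ∀ τ ∈ Icc (0:ℝ) 1, ‖γ τ‖ < 1 := fun τ hτ => mem_ball_zero_iff.mp (hγb τ hτ)
  have hhle : ∀ τ ∈ Icc (0:ℝ) 1, h τ ≤ ‖γ τ‖ := by
    intro τ hτ
    have := real_inner_le_norm (γ τ) u
    simpa [hh, hu] using this
  have hhpos : ∀ τ ∈ Icc (0:ℝ) 1, 0 < 1 - h τ := by
    intro τ hτ
    have := hγlt τ hτ; have := hhle τ hτ; linarith
  have hhd : ∀ τ ∈ Icc (0:ℝ) 1, HasDerivWithinAt h ((inner ℝ (g τ) u : ℝ)) (Icc 0 1) τ := by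
    intro τ hτ
    have := (hγd τ hτ).inner ℝ (hasDerivWithinAt_const τ (Icc 0 1) u)
    simpa using this
  set ψ : ℝ → ℝ := fun τ => (inner ℝ (g τ) u : ℝ) / (1 - h τ) with hψ
  have hψc : ContinuousOn ψ (Icc 0 1) := by
    apply (hgc.inner continuousOn_const).div (continuousOn_const.sub hhc)
    exact fun τ hτ => (hhpos τ hτ).ne'
  have hφcont : ContinuousOn (fun τ => -Real.log (1 - h τ)) (Icc 0 1) := by
    apply ContinuousOn.neg
    apply ContinuousOn.log (continuousOn_const.sub hhc)
    exact fun τ hτ => (hhpos τ hτ).ne'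
  have hFTC : (∫ τ in (0:ℝ)..1, ψ τ) =
      (-Real.log (1 - h 1)) - (-Real.log (1 - h 0)) := by
    apply intervalIntegral.integral_eq_sub_of_hasDeriv_right_of_le zero_le_one hφcont
    · intro x hx
      have hxI : x ∈ Icc (0:ℝ) 1 := Ioo_subset_Icc_self hx
      have hd : HasDerivAt h ((inner ℝ (g x) u : ℝ)) x :=
        (hhd x hxI).hasDerivAt (Icc_mem_nhds hx.1 hx.2)
      have hd1 : HasDerivAt (fun τ => 1 - h τ) (-(inner ℝ (g x) u : ℝ)) x := by
        simpa using hd.const_sub 1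
      have hd2 := (hd1.log (hhpos x hxI).ne').neg
      have : -(-(inner ℝ (g x) u : ℝ) / (1 - h x)) = ψ x := by
        simp [hψ]; ring
      rw [this] at hd2
      exact hd2.hasDerivWithinAt
    · apply ContinuousOn.intervalIntegrable
      rwa [uIcc_of_le zero_le_one]
  have hh0 : h 0 = r := by
    simp [hh, hγ0, real_inner_smul_left, real_inner_self_eq_norm_sq, hu]
  have hh1 : h 1 = s := by
    simp [hh, hγ1, real_inner_smul_left, real_inner_self_eq_norm_sq, hu]
  have hφval : (∫ τ in (0:ℝ)..1, ψ τ) = Real.log ((1 - r) / (1 - s)) := by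
    rw [hFTC, hh0, hh1, Real.log_div (by linarith) (by linarith)]
    ring
  -- compare integrands
  have hFeq : EqOn (fun τ => (infDist (γ τ) (frontier (ball (0:E) 1)))⁻¹ * ‖g τ‖)
      (fun τ => ‖g τ‖ / (1 - ‖γ τ‖)) (uIcc (0:ℝ) 1) := by
    intro τ hτ
    rw [uIcc_of_le zero_le_one] at hτ
    simp only [hρ _ (hγlt τ hτ), inv_mul_eq_div]
  have hFc : ContinuousOn (fun τ => ‖g τ‖ / (1 - ‖γ τ‖)) (Icc 0 1) := by
    apply hgc.norm.div (continuousOn_const.sub hγc.norm)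
    intro τ hτ
    have := hγlt τ hτ; intro hcon; rw [Pi.sub_apply, sub_eq_zero] at hcon; linarith
  have hmono : (∫ τ in (0:ℝ)..1, ψ τ) ≤ ∫ τ in (0:ℝ)..1, ‖g τ‖ / (1 - ‖γ τ‖) := by
    apply intervalIntegral.integral_mono_on zero_le_one
    · apply ContinuousOn.intervalIntegrable
      rwa [uIcc_of_le zero_le_one]
    · apply ContinuousOn.intervalIntegrable
      rwa [uIcc_of_le zero_le_one]
    · intro τ hτ
      have h1 : (inner ℝ (g τ) u : ℝ) ≤ ‖g τ‖ := by
        have := real_inner_le_norm (g τ) u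
        simpa [hu] using this
      have h2 : ψ τ ≤ ‖g τ‖ / (1 - h τ) := by
        apply div_le_div_of_nonneg_right h1 (hhpos τ hτ).le
      have h3 : ‖g τ‖ / (1 - h τ) ≤ ‖g τ‖ / (1 - ‖γ τ‖) := by
        apply div_le_div_of_nonneg_left (norm_nonneg _)
        · have := hγlt τ hτ; linarith
        · have := hhle τ hτ; linarith
      exact h2.trans h3
  rw [hLeq, intervalIntegral.integral_congr hFeq]
  rw [← hφval] at *
  exact hmono


lemma TMap_radial {E : Type*} [NormedAddCommGroup E] [InnerProductSpace ℝ E]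
    {a : E} (ha : a ≠ 0) (s : ℝ) (hs : s * ‖a‖ ^ 2 ≠ 1) :
    TMap a (s • a) = ((s - 1) / (1 - s * ‖a‖ ^ 2)) • a := by
  set A := ‖a‖ ^ 2 with hA
  have hA0 : A ≠ 0 := by
    simp [hA, ha]
  have hApos : 0 < A := lt_of_le_of_ne (by positivity) (Ne.symm hA0)
  set c : ℝ := s - A⁻¹ with hcdef
  have hc0 : c ≠ 0 := by
    intro h
    apply hs
    rw [hcdef, sub_eq_zero] at h
    rw [h]
    field_simp
  have hinva : invPt a = A⁻¹ • a := rfl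
  have hsub : s • a - invPt a = c • a := by
    rw [hinva, hcdef, sub_smul]
  have hinvca : invPt (c • a) = (c * A)⁻¹ • a := by
    rw [invPt, norm_smul, mul_pow, smul_smul]
    congr 1
    rw [Real.norm_eq_abs, sq_abs, ← hA]
    field_simp
  have hsigma : sigmaMap a (s • a) = (A⁻¹ + (A⁻¹ - 1) * (c * A)⁻¹) • a := by
    rw [sigmaMap, hsub, hinvca, hinva, ← hA, smul_smul, ← add_smul]
  set m : ℝ := A⁻¹ + (A⁻¹ - 1) * (c * A)⁻¹ with hm
  have hrefl : reflMap a (m • a) = (-m) • a := by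
    rw [reflMap, real_inner_smul_left, real_inner_self_eq_norm_sq, ← hA]
    have : 2 * (m * A) / A = 2 * m := by field_simp
    rw [this, ← sub_smul]
    congr 1
    ring
  have hT : TMap a (s • a) = (-m) • a := by
    rw [TMap, if_neg ha, hsigma, hrefl]
  rw [hT]
  congr 1
  have h1 : 1 - s * A ≠ 0 := fun h => hs (by linarith [sub_eq_zero.mp h])
  have h2 : s * A - 1 ≠ 0 := fun h => h1 (by linarith [sub_eq_zero.mp h])
  have hcA : c * A = s * A - 1 := by rw [hcdef]; field_simp
  rw [hm, hcA]
  have e : (s * A - 1)⁻¹ * (1 - s * A) = -1 := by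
    rw [show 1 - s * A = -(s * A - 1) by ring, mul_neg, inv_mul_cancel₀ h2]
  have e2 : A⁻¹ * A = 1 := inv_mul_cancel₀ hA0
  rw [eq_div_iff h1]
  linear_combination (-(A⁻¹ - 1)) * e + s * e2


/-- Explicit quasihyperbolic distances along the radius through `a`, and the
limit of the distortion ratio as `t → 0+`, showing sharpness of the constant `1/(1+|a|)`. -/
theorem qhDist_radial_formulas_and_limit {n : ℕ} (hn : 2 ≤ n)
    (a : EuclideanSpace ℝ (Fin n)) (ha0 : 0 < ‖a‖) (ha1 : ‖a‖ < 1) :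
    (∀ t : ℝ, 0 < t → (1 + t) • a ∈ ball (0 : EuclideanSpace ℝ (Fin n)) 1 →
      t * ‖a‖ < 1 - ‖a‖ →
      qhDist (ball (0 : EuclideanSpace ℝ (Fin n)) 1) a ((1 + t) • a) =
        Real.log (1 + t * ‖a‖ / (1 - ‖a‖ - t * ‖a‖)) ∧
      qhDist (ball (0 : EuclideanSpace ℝ (Fin n)) 1) (TMap a a) (TMap a ((1 + t) • a)) =
        Real.log (1 + t * ‖a‖ / (1 - t * ‖a‖ - (1 + t) * ‖a‖ ^ 2))) ∧
    Tendsto (fun t : ℝ =>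
        qhDist (ball (0 : EuclideanSpace ℝ (Fin n)) 1) (TMap a a) (TMap a ((1 + t) • a)) /
          qhDist (ball (0 : EuclideanSpace ℝ (Fin n)) 1) a ((1 + t) • a))
      (nhdsWithin 0 (Ioi 0)) (nhds (1 / (1 + ‖a‖))) := by
  haveI : Nonempty (Fin n) := ⟨⟨0, by omega⟩⟩
  haveI : Nontrivial (EuclideanSpace ℝ (Fin n)) := inferInstance
  have ha : a ≠ 0 := by intro h; rw [h] at ha0; simp at ha0
  set u : EuclideanSpace ℝ (Fin n) := ‖a‖⁻¹ • a with hudef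
  have hu : ‖u‖ = 1 := by
    rw [hudef, norm_smul, Real.norm_eq_abs, abs_of_pos (inv_pos.mpr ha0),
      inv_mul_cancel₀ ha0.ne']
  have hau : ‖a‖ • u = a := by
    rw [hudef, smul_smul, mul_inv_cancel₀ ha0.ne', one_smul]
  have part1 : ∀ t : ℝ, 0 < t → t * ‖a‖ < 1 - ‖a‖ →
      (qhDist (ball (0 : EuclideanSpace ℝ (Fin n)) 1) a ((1 + t) • a) =
        Real.log (1 + t * ‖a‖ / (1 - ‖a‖ - t * ‖a‖)) ∧
      qhDist (ball (0 : EuclideanSpace ℝ (Fin n)) 1) (TMap a a) (TMap a ((1 + t) • a)) =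
        Real.log (1 + t * ‖a‖ / (1 - t * ‖a‖ - (1 + t) * ‖a‖ ^ 2))) := by
    intro t ht hlt
    have hs1 : (1 + t) * ‖a‖ < 1 := by nlinarith
    constructor
    · have hq := qh_radial u hu (r := ‖a‖) (s := (1 + t) * ‖a‖) (norm_nonneg a)
        (by nlinarith) hs1
      rw [mul_smul, hau] at hq
      rw [hq]
      congr 1
      have hden : (0:ℝ) < 1 - ‖a‖ - t * ‖a‖ := by linarith
      rw [show (1:ℝ) - (1 + t) * ‖a‖ = 1 - ‖a‖ - t * ‖a‖ by ring]
      rw [one_add_div hden.ne']; congr 1; ring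
    · have hA2 : (1 + t) * ‖a‖ ^ 2 < 1 := by nlinarith
      have hA2' : (0:ℝ) < 1 - (1 + t) * ‖a‖ ^ 2 := by linarith
      have hTa : TMap a a = 0 := by
        have h := TMap_radial ha 1 (by nlinarith : (1:ℝ) * ‖a‖ ^ 2 ≠ 1)
        rw [one_smul] at h
        simpa using h
      have hTb : TMap a ((1 + t) • a) = (t * ‖a‖ / (1 - (1 + t) * ‖a‖ ^ 2)) • u := by
        rw [TMap_radial ha (1 + t) (ne_of_lt hA2), hudef, smul_smul]
        congr 1
        field_simp
        ring
      have hD : (0:ℝ) < 1 - t * ‖a‖ - (1 + t) * ‖a‖ ^ 2 := by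
        nlinarith [mul_pos (by linarith : (0:ℝ) < 1 + ‖a‖)
          (by linarith : (0:ℝ) < 1 - ‖a‖ - t * ‖a‖)]
      have hR0 : (0:ℝ) ≤ t * ‖a‖ / (1 - (1 + t) * ‖a‖ ^ 2) := by positivity
      have hR1 : t * ‖a‖ / (1 - (1 + t) * ‖a‖ ^ 2) < 1 := by
        rw [div_lt_one hA2']
        linarith
      have hq := qh_radial u hu (r := 0) le_rfl hR0 hR1
      rw [zero_smul] at hq
      rw [hTa, hTb, hq]
      congr 1
      rw [sub_zero]
      rw [show (1:ℝ) - t * ‖a‖ - (1 + t) * ‖a‖ ^ 2 =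
        (1 - (1 + t) * ‖a‖ ^ 2) - t * ‖a‖ by ring] at hD ⊢
      have h1 : (1 - (1 + t) * ‖a‖ ^ 2) - t * ‖a‖ ≠ 0 := hD.ne'
      rw [one_add_div h1, one_sub_div hA2'.ne', one_div_div]
      congr 1; ring
  refine ⟨fun t ht _ hlt => part1 t ht hlt, ?_⟩
  -- notation for the explicit formulas
  set f₁ : ℝ → ℝ := fun t => Real.log (1 + t * ‖a‖ / (1 - t * ‖a‖ - (1 + t) * ‖a‖ ^ 2))
    with hf₁
  set f₂ : ℝ → ℝ := fun t => Real.log (1 + t * ‖a‖ / (1 - ‖a‖ - t * ‖a‖)) with hf₂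
  have hεpos : (0:ℝ) < (1 - ‖a‖) / (2 * ‖a‖) := by
    apply div_pos (by linarith) (by positivity)
  have hev : (fun t : ℝ =>
        qhDist (ball (0 : EuclideanSpace ℝ (Fin n)) 1) (TMap a a) (TMap a ((1 + t) • a)) /
          qhDist (ball (0 : EuclideanSpace ℝ (Fin n)) 1) a ((1 + t) • a))
      =ᶠ[nhdsWithin 0 (Ioi 0)] fun t => f₁ t / f₂ t := by
    filter_upwards [Ioo_mem_nhdsGT_of_mem
      (⟨le_refl (0:ℝ), hεpos⟩ : (0:ℝ) ∈ Ico (0:ℝ) ((1 - ‖a‖) / (2 * ‖a‖)))] with t htm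
    have ht0 : 0 < t := htm.1
    have hlt : t * ‖a‖ < 1 - ‖a‖ := by
      have h2 : t * (2 * ‖a‖) < 1 - ‖a‖ := (lt_div_iff₀ (by positivity)).mp htm.2
      nlinarith [mul_pos ht0 ha0]
    obtain ⟨e1, e2⟩ := part1 t ht0 hlt
    rw [e1, e2]
  rw [tendsto_congr' hev]
  -- derivatives at 0
  have h1a : (0:ℝ) < 1 - ‖a‖ := by linarith
  have h2a : (0:ℝ) < 1 + ‖a‖ := by linarith
  have h3a : (0:ℝ) < 1 - ‖a‖ ^ 2 := by nlinarith
  have hnum : HasDerivAt (fun t : ℝ => t * ‖a‖) ‖a‖ 0 := by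
    simpa using (hasDerivAt_id (0:ℝ)).mul_const ‖a‖
  have hden1 : HasDerivAt (fun t : ℝ => 1 - t * ‖a‖ - (1 + t) * ‖a‖ ^ 2)
      (-‖a‖ - ‖a‖ ^ 2) 0 := by
    have h1 : HasDerivAt (fun t : ℝ => 1 - t * ‖a‖) (-‖a‖) 0 := by
      simpa using ((hasDerivAt_id (0:ℝ)).mul_const ‖a‖).const_sub 1
    have h2 : HasDerivAt (fun t : ℝ => (1 + t) * ‖a‖ ^ 2) (‖a‖ ^ 2) 0 := by
      simpa using ((hasDerivAt_id (0:ℝ)).const_add 1).mul_const (‖a‖ ^ 2)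
    exact h1.sub h2
  have hden2 : HasDerivAt (fun t : ℝ => 1 - ‖a‖ - t * ‖a‖) (-‖a‖) 0 := by
    simpa using ((hasDerivAt_id (0:ℝ)).mul_const ‖a‖).const_sub (1 - ‖a‖)
  have hd1 : HasDerivAt f₁ (‖a‖ / (1 - ‖a‖ ^ 2)) 0 := by
    have hden0 : (fun t : ℝ => 1 - t * ‖a‖ - (1 + t) * ‖a‖ ^ 2) 0 ≠ 0 := by
      norm_num; nlinarith
    have hq := hnum.div hden1 hden0
    have hin := hq.const_add 1
    have hval : (1:ℝ) + (fun t : ℝ => t * ‖a‖ / (1 - t * ‖a‖ - (1 + t) * ‖a‖ ^ 2)) 0 ≠ 0 := by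
      norm_num
    have hlog := hin.log (by simpa using hval)
    rw [hf₁]
    convert hlog using 1
    simp only [Pi.div_apply]
    rw [show (1:ℝ) - 0 * ‖a‖ - (1 + 0) * ‖a‖ ^ 2 = 1 - ‖a‖ ^ 2 by ring]
    simp only [zero_mul, sub_zero, zero_div, add_zero, div_one]
    field_simp
    simp
  have hd2 : HasDerivAt f₂ (‖a‖ / (1 - ‖a‖)) 0 := by
    have hden0 : (fun t : ℝ => 1 - ‖a‖ - t * ‖a‖) 0 ≠ 0 := by
      norm_num; linarith
    have hq := hnum.div hden2 hden0
    have hin := hq.const_add 1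
    have hval : (1:ℝ) + (fun t : ℝ => t * ‖a‖ / (1 - ‖a‖ - t * ‖a‖)) 0 ≠ 0 := by
      norm_num
    have hlog := hin.log (by simpa using hval)
    rw [hf₂]
    convert hlog using 1
    simp only [Pi.div_apply]
    rw [show (1:ℝ) - ‖a‖ - 0 * ‖a‖ = 1 - ‖a‖ by ring]
    simp only [zero_mul, sub_zero, zero_div, add_zero, div_one]
    field_simp
    simp
  -- slope limits
  have hmono : nhdsWithin (0:ℝ) (Ioi 0) ≤ nhdsWithin 0 {0}ᶜ :=
    nhdsWithin_mono 0 (fun x hx => Set.mem_compl_singleton_iff.mpr (ne_of_gt hx))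
  have hs1 := (hasDerivAt_iff_tendsto_slope.mp hd1).mono_left hmono
  have hs2 := (hasDerivAt_iff_tendsto_slope.mp hd2).mono_left hmono
  have hne : ‖a‖ / (1 - ‖a‖) ≠ 0 := by positivity
  have hdiv := hs1.div hs2 hne
  have hval : ‖a‖ / (1 - ‖a‖ ^ 2) / (‖a‖ / (1 - ‖a‖)) = 1 / (1 + ‖a‖) := by
    rw [show (1:ℝ) - ‖a‖ ^ 2 = (1 - ‖a‖) * (1 + ‖a‖) by ring]
    field_simp
  rw [hval] at hdiv
  apply hdiv.congr'
  filter_upwards [self_mem_nhdsWithin] with t ht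
  have ht0 : t ≠ 0 := ne_of_gt ht
  have hz1 : f₁ 0 = 0 := by simp [hf₁]
  have hz2 : f₂ 0 = 0 := by simp [hf₂]
  simp only [Pi.div_apply]
  rw [slope_def_field, slope_def_field, hz1, hz2, sub_zero, sub_zero, sub_zero]
  rcases eq_or_ne (f₂ t) 0 with h | h
  · rw [h, zero_div, div_zero, div_zero]
  · rw [div_div_div_cancel_right₀]
    exact ht0
end

section
/- Let n ≥ 2, a ∈ Bⁿ with 0 < |a| < 1, and e_a = a/|a|. For t ∈ (0,1), the ratio j_{Bⁿ}(T_a(−t e_a), T_a(t e_a)) / j_{Bⁿ}(−t e_a, t e_a) equals 1 + arctanh(|a|t)/arctanh(t); this expression is strictly decreasing in t on (0,1) with range (1, 1+|a|), and consequently sup_{t∈(0,1)} j_{Bⁿ}(T_a(−t e_a), T_a(t e_a)) / j_{Bⁿ}(−t e_a, t e_a) = 1+|a|. -/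
open Metric Set Real Filter

/-- The distance-ratio metric `j_D(x,y) = log (1 + |x-y| / min (d(x,∂D), d(y,∂D)))`. -/
noncomputable def jDist {E : Type*} [NormedAddCommGroup E] [NormedSpace ℝ E]
    (D : Set E) (x y : E) : ℝ :=
  Real.log (1 + dist x y / min (infDist x (frontier D)) (infDist y (frontier D)))

/-- The inverse hyperbolic tangent, `arctanh x = (1/2) log ((1+x)/(1-x))`. -/
noncomputable def arctanh (x : ℝ) : ℝ := (1 / 2) * Real.log ((1 + x) / (1 - x))



lemma arctanh_zero : arctanh 0 = 0 := by simp [arctanh]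

lemma arctanh_lt {x y : ℝ} (hx : 0 ≤ x) (hxy : x < y) (hy : y < 1) :
    arctanh x < arctanh y := by
  have h1 : (0:ℝ) < 1 - y := by linarith
  have h2 : (0:ℝ) < 1 - x := by linarith
  have h3 : (0:ℝ) < 1 + x := by linarith
  unfold arctanh
  have hlog : Real.log ((1 + x) / (1 - x)) < Real.log ((1 + y) / (1 - y)) := by
    apply Real.log_lt_log (by positivity)
    rw [div_lt_div_iff₀ h2 h1]
    nlinarith
  linarith

lemma arctanh_pos {x : ℝ} (h0 : 0 < x) (h1 : x < 1) : 0 < arctanh x := by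
  have := arctanh_lt le_rfl h0 h1
  rwa [arctanh_zero] at this

lemma arctanh_nonneg {x : ℝ} (h0 : 0 ≤ x) (h1 : x < 1) : 0 ≤ arctanh x := by
  rcases eq_or_lt_of_le h0 with h | h
  · rw [← h, arctanh_zero]
  · exact (arctanh_pos h h1).le

lemma arctanh_le_upper {t : ℝ} (h0 : 0 ≤ t) (h1 : t < 1) : arctanh t ≤ t / (1 - t) := by
  have h2 : (0:ℝ) < 1 - t := by linarith
  have h3 : (0:ℝ) < 1 + t := by linarith
  have hlog := Real.log_le_sub_one_of_pos (show (0:ℝ) < (1+t)/(1-t) by positivity)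
  have heq : (1+t)/(1-t) - 1 = 2*t/(1-t) := by field_simp; ring
  rw [heq] at hlog
  unfold arctanh
  rw [div_eq_mul_inv (2*t), div_eq_mul_inv t] at *
  nlinarith [inv_pos.mpr h2]

lemma arctanh_ge_lower {t : ℝ} (h0 : 0 ≤ t) (h1 : t < 1) : t / (1 + t) ≤ arctanh t := by
  have h2 : (0:ℝ) < 1 - t := by linarith
  have h3 : (0:ℝ) < 1 + t := by linarith
  have hlog := Real.one_sub_inv_le_log_of_pos (show (0:ℝ) < (1+t)/(1-t) by positivity)
  have heq : 1 - ((1+t)/(1-t))⁻¹ = 2*t/(1+t) := by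
    rw [inv_div]; field_simp; ring
  rw [heq] at hlog
  unfold arctanh
  rw [div_eq_mul_inv (2*t), div_eq_mul_inv t] at *
  nlinarith [inv_pos.mpr h3]

lemma arctanh_ge_log {t : ℝ} (h0 : 0 ≤ t) (h1 : t < 1) :
    (1/2) * Real.log ((1 - t)⁻¹) ≤ arctanh t := by
  have h2 : (0:ℝ) < 1 - t := by linarith
  have h3 : (0:ℝ) < 1 + t := by linarith
  unfold arctanh
  have : Real.log ((1-t)⁻¹) ≤ Real.log ((1+t)/(1-t)) := by
    apply Real.log_le_log (by positivity)
    rw [inv_eq_one_div, div_le_div_iff_of_pos_right h2]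
    linarith
  linarith

lemma arctanh_hasDerivAt {x : ℝ} (h1 : -1 < x) (h2 : x < 1) :
    HasDerivAt arctanh (1 / (1 - x^2)) x := by
  have hx1 : (0:ℝ) < 1 + x := by linarith
  have hx2 : (0:ℝ) < 1 - x := by linarith
  have hd : HasDerivAt (fun y : ℝ => (1/2) * (Real.log (1+y) - Real.log (1-y)))
      (1 / (1 - x^2)) x := by
    have h3 : HasDerivAt (fun y : ℝ => 1 + y) 1 x := by
      simpa using (hasDerivAt_id x).const_add (1:ℝ)
    have h4 : HasDerivAt (fun y : ℝ => 1 - y) (-1) x := by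
      simpa using (hasDerivAt_id x).const_sub (1:ℝ)
    have h5 := (h3.log hx1.ne').sub (h4.log hx2.ne')
    have h6 := h5.const_mul (1/2 : ℝ)
    have hx3 : (1:ℝ) - x^2 ≠ 0 := by nlinarith
    refine h6.congr_deriv ?_
    field_simp
    ring
  apply hd.congr_of_eventuallyEq
  filter_upwards [Ioo_mem_nhds h1 h2] with y hy
  have hy1 : (0:ℝ) < 1 + y := by linarith [hy.1]
  have hy2 : (0:ℝ) < 1 - y := by linarith [hy.2]
  rw [arctanh, Real.log_div hy1.ne' hy2.ne']

lemma arctanh_continuousAt {x : ℝ} (h1 : -1 < x) (h2 : x < 1) : ContinuousAt arctanh x :=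
  (arctanh_hasDerivAt h1 h2).differentiableAt.continuousAt

lemma N_neg {α : ℝ} (hα : 0 < α) (hα1 : α < 1) {t : ℝ} (ht : t ∈ Ioo (0:ℝ) 1) :
    α * (1 - t^2) * arctanh t - (1 - α^2 * t^2) * arctanh (α * t) < 0 := by
  have key : StrictAntiOn
      (fun t : ℝ => α * (1 - t^2) * arctanh t - (1 - α^2 * t^2) * arctanh (α * t))
      (Ico (0:ℝ) 1) := by
    apply strictAntiOn_of_deriv_neg (convex_Ico 0 1)
    · intro x hx
      have hx0 : (0:ℝ) ≤ x := hx.1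
      have hx1 : x < 1 := hx.2
      have hax : α * x < 1 := by nlinarith
      have hax0 : -1 < α * x := by nlinarith
      apply ContinuousAt.continuousWithinAt
      have c1 : ContinuousAt arctanh x := arctanh_continuousAt (by linarith) hx1
      have c2 : ContinuousAt (fun t : ℝ => arctanh (α * t)) x :=
        (arctanh_continuousAt hax0 hax).comp ((continuous_const.mul continuous_id).continuousAt)
      exact (((continuous_const.mul (continuous_const.sub (continuous_pow 2))).continuousAt).mul
        c1).sub (((continuous_const.sub (continuous_const.mul (continuous_pow 2))).continuousAt).mul c2)
    · rw [interior_Ico]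
      intro x hx
      obtain ⟨hx0, hx1⟩ := hx
      have hax : α * x < 1 := by nlinarith
      have hax0 : (0:ℝ) < α * x := by positivity
      have hB := arctanh_hasDerivAt (by linarith : (-1:ℝ) < x) hx1
      have hA : HasDerivAt (fun t : ℝ => α * (1 - t^2)) (α * (-(2*x))) x := by
        have h := ((hasDerivAt_pow 2 x).const_sub 1).const_mul α
        simpa using h
      have hC : HasDerivAt (fun t : ℝ => 1 - α^2 * t^2) (-(α^2 * (2*x))) x := by
        have h := ((hasDerivAt_pow 2 x).const_mul (α^2)).const_sub 1
        simpa using h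
      have hD : HasDerivAt (fun t : ℝ => arctanh (α * t)) (1 / (1 - (α*x)^2) * α) x := by
        have hinner : HasDerivAt (fun t : ℝ => α * t) α x := by
          simpa using (hasDerivAt_id x).const_mul α
        exact (arctanh_hasDerivAt (by linarith) hax).comp x hinner
      have hN := (hA.mul hB).sub (hC.mul hD)
      rw [show deriv (fun t : ℝ => α * (1 - t^2) * arctanh t - (1 - α^2 * t^2) * arctanh (α * t)) x = _ from hN.deriv]
      have e1 : α * (1 - x^2) * (1 / (1 - x^2)) = α := by
        have : (1:ℝ) - x^2 ≠ 0 := by nlinarith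
        field_simp
      have e2 : (1 - α^2 * x^2) * (1 / (1 - (α*x)^2) * α) = α := by
        have : (1:ℝ) - (α*x)^2 ≠ 0 := by nlinarith
        have : (1:ℝ) - α^2*x^2 ≠ 0 := by nlinarith
        field_simp
      have harc1 : arctanh (α * x) < arctanh x := arctanh_lt (by positivity) (by nlinarith) hx1
      have harc2 : 0 < arctanh (α * x) := arctanh_pos hax0 hax
      rw [e1, e2]
      have hkey : α * arctanh (α*x) < arctanh x := by nlinarith
      nlinarith [mul_pos (mul_pos hα hx0) (sub_pos.mpr hkey)]
  have h0 : (0:ℝ) ∈ Ico (0:ℝ) 1 := ⟨le_rfl, one_pos⟩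
  have ht' : t ∈ Ico (0:ℝ) 1 := ⟨ht.1.le, ht.2⟩
  have := key h0 ht' ht.1
  simpa [arctanh_zero] using this

lemma arctanh_mul_lt {α : ℝ} (hα : 0 < α) (hα1 : α < 1) {t : ℝ} (ht : t ∈ Ioo (0:ℝ) 1) :
    arctanh (α * t) < α * arctanh t := by
  have key : StrictMonoOn (fun t : ℝ => α * arctanh t - arctanh (α * t)) (Ico (0:ℝ) 1) := by
    apply strictMonoOn_of_deriv_pos (convex_Ico 0 1)
    · intro x hx
      have hax : α * x < 1 := by nlinarith [hx.1, hx.2]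
      have hax0 : -1 < α * x := by nlinarith [hx.1]
      apply ContinuousAt.continuousWithinAt
      exact (continuous_const.continuousAt.mul
          (arctanh_continuousAt (by linarith [hx.1]) hx.2)).sub
        ((arctanh_continuousAt hax0 hax).comp ((continuous_const.mul continuous_id).continuousAt))
    · rw [interior_Ico]
      intro x hx
      obtain ⟨hx0, hx1⟩ := hx
      have hax : α * x < 1 := by nlinarith
      have hB := (arctanh_hasDerivAt (by linarith : (-1:ℝ) < x) hx1).const_mul α
      have hD : HasDerivAt (fun t : ℝ => arctanh (α * t)) (1 / (1 - (α*x)^2) * α) x := by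
        have hinner : HasDerivAt (fun t : ℝ => α * t) α x := by
          simpa using (hasDerivAt_id x).const_mul α
        exact (arctanh_hasDerivAt (by nlinarith) hax).comp x hinner
      have hM := hB.sub hD
      rw [show deriv (fun t : ℝ => α * arctanh t - arctanh (α * t)) x = _ from hM.deriv]
      have hax0 : (0:ℝ) < α * x := by positivity
      have p1 : (0:ℝ) < 1 - x^2 := by nlinarith
      have p2 : (0:ℝ) < 1 - (α*x)^2 := by
        nlinarith [mul_pos (sub_pos.mpr hax) (by positivity : (0:ℝ) < 1 + α*x)]
      have q1 : (0:ℝ) < 1 - α^2 := by nlinarith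
      have p1' : (1:ℝ) - x^2 ≠ 0 := by nlinarith
      have p2'' : (1:ℝ) - α^2*x^2 ≠ 0 := by nlinarith
      rw [show α * (1 / (1 - x ^ 2)) - 1 / (1 - (α * x) ^ 2) * α
          = α * (x^2 * (1 - α^2)) / ((1 - x^2) * (1 - (α*x)^2)) by field_simp; ring]
      exact div_pos (mul_pos hα (mul_pos (pow_pos hx0 2) q1)) (mul_pos p1 p2)
  have h0 : (0:ℝ) ∈ Ico (0:ℝ) 1 := ⟨le_rfl, one_pos⟩
  have ht' : t ∈ Ico (0:ℝ) 1 := ⟨ht.1.le, ht.2⟩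
  have := key h0 ht' ht.1
  simp only [arctanh_zero, mul_zero, sub_zero] at this
  linarith

lemma f_strictAntiOn {α : ℝ} (hα : 0 < α) (hα1 : α < 1) :
    StrictAntiOn (fun t : ℝ => 1 + arctanh (α * t) / arctanh t) (Ioo 0 1) := by
  apply strictAntiOn_of_deriv_neg (convex_Ioo 0 1)
  · intro x hx
    have hax : α * x < 1 := by nlinarith [hx.1, hx.2]
    have hax0 : -1 < α * x := by nlinarith [hx.1]
    apply ContinuousAt.continuousWithinAt
    have hne : arctanh x ≠ 0 := (arctanh_pos hx.1 hx.2).ne'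
    exact continuous_const.continuousAt.add
      (((arctanh_continuousAt hax0 hax).comp
        ((continuous_const.mul continuous_id).continuousAt)).div
        (arctanh_continuousAt (by linarith [hx.1]) hx.2) hne)
  · rw [interior_Ioo]
    intro x hx
    obtain ⟨hx0, hx1⟩ := hx
    have hax : α * x < 1 := by nlinarith
    have hax0 : (0:ℝ) < α * x := by positivity
    have hA : (0:ℝ) < arctanh x := arctanh_pos hx0 hx1
    have hB := arctanh_hasDerivAt (by linarith : (-1:ℝ) < x) hx1
    have p2' : (0:ℝ) < 1 - (α*x)^2 := by
      nlinarith [mul_pos (sub_pos.mpr hax) (by positivity : (0:ℝ) < 1 + α*x)]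
    have hD : HasDerivAt (fun t : ℝ => arctanh (α * t)) (1 / (1 - (α*x)^2) * α) x := by
      have hinner : HasDerivAt (fun t : ℝ => α * t) α x := by
        simpa using (hasDerivAt_id x).const_mul α
      exact (arctanh_hasDerivAt (by linarith) hax).comp x hinner
    have hf := (hD.div hB hA.ne').const_add 1
    rw [show deriv (fun t : ℝ => 1 + arctanh (α * t) / arctanh t) x = _ from hf.deriv]
    apply div_neg_of_neg_of_pos _ (by positivity)
    have p1 : (0:ℝ) < 1 - x^2 := by nlinarith
    have p2 : (0:ℝ) < 1 - (α*x)^2 := p2'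
    have p1' : (1:ℝ) - x^2 ≠ 0 := by nlinarith
    have p2'' : (1:ℝ) - α^2*x^2 ≠ 0 := by nlinarith
    rw [show 1 / (1 - (α * x) ^ 2) * α * arctanh x - arctanh (α * x) * (1 / (1 - x ^ 2))
        = (α * (1 - x^2) * arctanh x - (1 - α^2 * x^2) * arctanh (α * x))
          / ((1 - (α*x)^2) * (1 - x^2)) by field_simp]
    exact div_neg_of_neg_of_pos (N_neg hα hα1 ⟨hx0, hx1⟩) (by positivity)

lemma f_continuousOn {α : ℝ} (hα : 0 < α) (hα1 : α < 1) :
    ContinuousOn (fun t : ℝ => 1 + arctanh (α * t) / arctanh t) (Ioo 0 1) := by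
  intro x hx
  have hax : α * x < 1 := by nlinarith [hx.1, hx.2]
  have hax0 : -1 < α * x := by nlinarith [hx.1]
  apply ContinuousAt.continuousWithinAt
  exact continuous_const.continuousAt.add
    (((arctanh_continuousAt hax0 hax).comp
      ((continuous_const.mul continuous_id).continuousAt)).div
      (arctanh_continuousAt (by linarith [hx.1]) hx.2) (arctanh_pos hx.1 hx.2).ne')

lemma f_image {α : ℝ} (hα : 0 < α) (hα1 : α < 1) :
    (fun t : ℝ => 1 + arctanh (α * t) / arctanh t) '' Ioo 0 1 = Ioo 1 (1 + α) := by
  set f : ℝ → ℝ := fun t => 1 + arctanh (α * t) / arctanh t with hf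
  apply Subset.antisymm
  · rintro _ ⟨t, ht, rfl⟩
    have hA : (0:ℝ) < arctanh t := arctanh_pos ht.1 ht.2
    have hax : α * t < 1 := by nlinarith [ht.1, ht.2]
    have hB : (0:ℝ) < arctanh (α * t) := arctanh_pos (mul_pos hα ht.1) hax
    constructor
    · have : 0 < arctanh (α * t) / arctanh t := div_pos hB hA
      simp only [hf]; linarith
    · have hM := arctanh_mul_lt hα hα1 ht
      have : arctanh (α * t) / arctanh t < α := (div_lt_iff₀ hA).mpr (by linarith)
      simp only [hf]; linarith
  · intro c hc
    obtain ⟨hc1, hc2⟩ := hc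
    set c' : ℝ := c - 1 with hc'
    have hc'0 : 0 < c' := by simp [hc']; linarith
    have hc'α : c' < α := by simp [hc']; linarith
    -- point with large value
    set t₁ : ℝ := (α - c') / (2 * α * (1 + c')) with ht₁def
    have ht₁0 : 0 < t₁ := by apply div_pos <;> nlinarith
    have ht₁1 : t₁ < 1 := by
      rw [ht₁def, div_lt_one (by nlinarith)]
      nlinarith
    have ht₁mem : t₁ ∈ Ioo (0:ℝ) 1 := ⟨ht₁0, ht₁1⟩
    have hat₁ : α * t₁ < 1 := by nlinarith
    have hA₁ : (0:ℝ) < arctanh t₁ := arctanh_pos ht₁0 ht₁1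
    have hft₁ : c < f t₁ := by
      have hlow : α * t₁ / (1 + α * t₁) ≤ arctanh (α * t₁) :=
        arctanh_ge_lower (by positivity) hat₁
      have hup : arctanh t₁ ≤ t₁ / (1 - t₁) := arctanh_le_upper ht₁0.le ht₁1
      have hq : (α * t₁ / (1 + α * t₁)) / (t₁ / (1 - t₁)) ≤ arctanh (α * t₁) / arctanh t₁ :=
        div_le_div₀ (arctanh_nonneg (by positivity) hat₁) hlow hA₁ hup
      have hqeq : (α * t₁ / (1 + α * t₁)) / (t₁ / (1 - t₁)) = α * (1 - t₁) / (1 + α * t₁) := by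
        have hne1 : (1:ℝ) + α * t₁ ≠ 0 := by positivity
        have hne2 : (1:ℝ) - t₁ ≠ 0 := ne_of_gt (by linarith)
        field_simp
      have hgt : c' < α * (1 - t₁) / (1 + α * t₁) := by
        rw [lt_div_iff₀ (by positivity)]
        have h2 : t₁ * (2 * α * (1 + c')) = α - c' := by
          rw [ht₁def]; field_simp
        nlinarith
      have : c' < arctanh (α * t₁) / arctanh t₁ := by
        calc c' < α * (1 - t₁) / (1 + α * t₁) := hgt
        _ = (α * t₁ / (1 + α * t₁)) / (t₁ / (1 - t₁)) := hqeq.symm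
        _ ≤ _ := hq
      simp only [hf, hc'] at *; linarith
    -- point with small value
    have harcα : 0 < arctanh α := arctanh_pos hα hα1
    obtain ⟨K, hKdef⟩ : ∃ K : ℝ, K = arctanh α / c' + 1 := ⟨_, rfl⟩
    have hKpos : 0 < K := by rw [hKdef]; positivity
    obtain ⟨t₂, ht₂def⟩ : ∃ t : ℝ, t = 1 - Real.exp (-(2*K)) := ⟨_, rfl⟩
    have hexp1 : Real.exp (-(2*K)) < 1 := Real.exp_lt_one_iff.mpr (by linarith)
    have ht₂0 : 0 < t₂ := by rw [ht₂def]; linarith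
    have ht₂1 : t₂ < 1 := by
      have := Real.exp_pos (-(2*K)); rw [ht₂def]; linarith
    have ht₂mem : t₂ ∈ Ioo (0:ℝ) 1 := ⟨ht₂0, ht₂1⟩
    have hA₂ : K ≤ arctanh t₂ := by
      have h := arctanh_ge_log ht₂0.le ht₂1
      have he : (1 - t₂)⁻¹ = Real.exp (2*K) := by
        rw [ht₂def]; simp [← Real.exp_neg]
      rw [he, Real.log_exp] at h
      linarith
    have hat₂ : α * t₂ < α := by nlinarith
    have hB₂ : arctanh (α * t₂) < arctanh α := arctanh_lt (by positivity) hat₂ hα1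
    have hft₂ : f t₂ < c := by
      have h1 : arctanh (α * t₂) / arctanh t₂ ≤ arctanh α / K :=
        div_le_div₀ (arctanh_nonneg hα.le hα1) hB₂.le hKpos hA₂
      have h2 : arctanh α / K < c' := by
        rw [div_lt_iff₀ hKpos]
        have h3 : c' * K = arctanh α + c' := by
          rw [hKdef]; field_simp
        nlinarith
      simp only [hf, hc'] at *
      linarith
    have hpre : IsPreconnected (f '' Ioo 0 1) :=
      isPreconnected_Ioo.image f (f_continuousOn hα hα1)
    have hord := hpre.ordConnected
    exact hord.out (mem_image_of_mem f ht₂mem) (mem_image_of_mem f ht₁mem)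
      ⟨hft₂.le, hft₁.le⟩

section Geometry

variable {E : Type*} [NormedAddCommGroup E] [InnerProductSpace ℝ E]

lemma norm_unit (a : E) (ha : a ≠ 0) : ‖(‖a‖⁻¹ • a)‖ = 1 := by
  rw [norm_smul, norm_inv, norm_norm, inv_mul_cancel₀ (norm_ne_zero_iff.mpr ha)]

lemma invPt_smul (a : E) (c : ℝ) :
    invPt (c • a) = (c * ‖a‖ ^ 2)⁻¹ • a := by
  rcases eq_or_ne c 0 with rfl | hc
  · rw [zero_smul, zero_mul, inv_zero, zero_smul, invPt, smul_zero]
  rw [invPt, smul_smul]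
  congr 1
  rw [norm_smul, mul_pow, Real.norm_eq_abs, sq_abs, mul_inv]
  rcases eq_or_ne (‖a‖) 0 with h0 | h0
  · simp [h0]
  field_simp

lemma TMap_smul_unit (a : E) (ha : a ≠ 0) {s : ℝ} (hs : ‖a‖ * s ≠ 1) :
    TMap a (s • (‖a‖⁻¹ • a)) = ((s - ‖a‖) / (1 - ‖a‖ * s)) • (‖a‖⁻¹ • a) := by
  have hα0 : 0 < ‖a‖ := norm_pos_iff.mpr ha
  have hαne : ‖a‖ ≠ 0 := hα0.ne'
  have hc₀ : s * ‖a‖⁻¹ - (‖a‖^2)⁻¹ ≠ 0 := by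
    rw [show s * ‖a‖⁻¹ - (‖a‖^2)⁻¹ = (‖a‖*s - 1)/‖a‖^2 by field_simp]
    exact div_ne_zero (sub_ne_zero.mpr hs) (pow_ne_zero 2 hαne)
  have h1 : s • (‖a‖⁻¹ • a) = (s * ‖a‖⁻¹) • a := by rw [smul_smul]
  have h2 : sigmaMap a ((s * ‖a‖⁻¹) • a) =
      ((‖a‖^2)⁻¹ + ((‖a‖^2)⁻¹ - 1) * ((s * ‖a‖⁻¹ - (‖a‖^2)⁻¹) * ‖a‖^2)⁻¹) • a := by
    rw [sigmaMap]
    rw [show (s * ‖a‖⁻¹) • a - invPt a = (s * ‖a‖⁻¹ - (‖a‖^2)⁻¹) • a by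
      rw [invPt, sub_smul]]
    rw [invPt_smul a _, invPt, smul_smul, ← add_smul]
  have h3 : ∀ σ : ℝ, reflMap a (σ • a) = (-σ) • a := by
    intro σ
    rw [reflMap, real_inner_smul_left, real_inner_self_eq_norm_sq, ← sub_smul]
    congr 1
    field_simp
    ring
  rw [TMap, if_neg ha, h1, h2, h3, smul_smul]
  congr 1
  have hden : 1 - ‖a‖ * s ≠ 0 := fun h => hs (by linarith [sub_eq_zero.mp h])
  have hprod : (s * ‖a‖⁻¹ - (‖a‖^2)⁻¹) * ‖a‖^2 = ‖a‖ * s - 1 := by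
    field_simp
  rw [hprod]
  have hne1 : ‖a‖ * s - 1 ≠ 0 := sub_ne_zero.mpr hs
  field_simp
  ring

lemma infDist_sphere_one {F : Type*} [NormedAddCommGroup F] [NormedSpace ℝ F] [Nontrivial F]
    (z : F) (hz : ‖z‖ ≤ 1) : infDist z (sphere (0:F) 1) = 1 - ‖z‖ := by
  obtain ⟨w₀, hw₀⟩ := exists_norm_eq F zero_le_one
  have hmem : w₀ ∈ sphere (0:F) 1 := by simp [hw₀]
  have hne : (sphere (0:F) 1).Nonempty := ⟨w₀, hmem⟩
  apply le_antisymm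
  · rcases eq_or_ne z 0 with rfl | hz0
    · have := infDist_le_dist_of_mem hmem (x := (0:F))
      simpa [hw₀, dist_eq_norm] using this
    · have hzpos : 0 < ‖z‖ := norm_pos_iff.mpr hz0
      have h1 : ‖z‖⁻¹ • z ∈ sphere (0:F) 1 := by
        simp [norm_smul, abs_of_pos (inv_pos.mpr hzpos), inv_mul_cancel₀ hzpos.ne']
      have h2 := infDist_le_dist_of_mem h1 (x := z)
      have h3 : dist z (‖z‖⁻¹ • z) = 1 - ‖z‖ := by
        rw [dist_eq_norm, show z - ‖z‖⁻¹ • z = (1 - ‖z‖⁻¹) • z by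
          rw [sub_smul, one_smul], norm_smul, Real.norm_eq_abs]
        have hge : (1:ℝ) ≤ ‖z‖⁻¹ := by rwa [le_inv_comm₀ one_pos hzpos, inv_one]
        rw [abs_of_nonpos (by linarith)]
        field_simp
        ring
      rwa [h3] at h2
  · by_contra hcon
    push_neg at hcon
    rw [infDist_lt_iff hne] at hcon
    obtain ⟨w, hw, hlt⟩ := hcon
    rw [mem_sphere_zero_iff_norm] at hw
    have : (1:ℝ) - ‖z‖ ≤ dist z w := by
      rw [dist_eq_norm]
      have := norm_sub_norm_le w z
      rw [hw] at this
      linarith [norm_sub_rev w z ▸ this]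
    linarith

lemma jDist_ball_one {F : Type*} [NormedAddCommGroup F] [NormedSpace ℝ F] [Nontrivial F]
    (x y : F) (hx : ‖x‖ < 1) (hy : ‖y‖ < 1) :
    jDist (ball (0:F) 1) x y = Real.log (1 + dist x y / (1 - max ‖x‖ ‖y‖)) := by
  rw [jDist, frontier_ball (0:F) one_ne_zero, infDist_sphere_one x hx.le,
    infDist_sphere_one y hy.le, min_sub_sub_left]

lemma jDist_smul_unit {F : Type*} [NormedAddCommGroup F] [NormedSpace ℝ F] [Nontrivial F]
    {e : F} (he : ‖e‖ = 1) {c d : ℝ} (hc : |c| < 1) (hd : |d| < 1) :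
    jDist (ball (0:F) 1) (c • e) (d • e) = Real.log (1 + |c - d| / (1 - max |c| |d|)) := by
  have hnc : ‖c • e‖ = |c| := by rw [norm_smul, he, mul_one, Real.norm_eq_abs]
  have hnd : ‖d • e‖ = |d| := by rw [norm_smul, he, mul_one, Real.norm_eq_abs]
  rw [jDist_ball_one _ _ (by rw [hnc]; exact hc) (by rw [hnd]; exact hd), hnc, hnd,
    dist_eq_norm, ← sub_smul, norm_smul, he, mul_one, Real.norm_eq_abs]

lemma jDist_ratio_eq {F : Type*} [NormedAddCommGroup F] [InnerProductSpace ℝ F]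
    (a : F) (ha0 : 0 < ‖a‖) (ha1 : ‖a‖ < 1) {t : ℝ} (ht : t ∈ Ioo (0:ℝ) 1) :
    jDist (ball (0:F) 1) (TMap a (-(t • (‖a‖⁻¹ • a)))) (TMap a (t • (‖a‖⁻¹ • a))) /
      jDist (ball (0:F) 1) (-(t • (‖a‖⁻¹ • a))) (t • (‖a‖⁻¹ • a))
    = 1 + arctanh (‖a‖ * t) / arctanh t := by
  obtain ⟨ht0, ht1⟩ := ht
  have ha : a ≠ 0 := norm_pos_iff.mp ha0
  haveI : Nontrivial F := nontrivial_of_ne a 0 ha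
  have he : ‖(‖a‖⁻¹ • a)‖ = 1 := norm_unit a ha
  have hαt : ‖a‖ * t < 1 := by nlinarith
  have hαt0 : 0 < ‖a‖ * t := mul_pos ha0 ht0
  have hd1 : (0:ℝ) < 1 - ‖a‖ * t := by linarith
  have hd2 : (0:ℝ) < 1 + ‖a‖ * t := by linarith
  have hAt : (0:ℝ) < arctanh t := arctanh_pos ht0 ht1
  have h1t : (1:ℝ) - t ≠ 0 := by linarith
  have h1t' : (0:ℝ) < 1 - t := by linarith
  -- denominator
  have hneg : -(t • (‖a‖⁻¹ • a)) = (-t) • (‖a‖⁻¹ • a) := (neg_smul t _).symm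
  have habs_t : |t| < 1 := by rw [abs_of_pos ht0]; exact ht1
  have habs_nt : |(-t)| < 1 := by rwa [abs_neg]
  have hden : jDist (ball (0:F) 1) (-(t • (‖a‖⁻¹ • a))) (t • (‖a‖⁻¹ • a))
      = 2 * arctanh t := by
    rw [hneg, jDist_smul_unit he habs_nt habs_t]
    rw [abs_neg, abs_of_pos ht0, max_self]
    rw [show |-t - t| = 2*t by rw [abs_of_nonpos (by linarith)]; ring]
    rw [show 1 + 2*t/(1-t) = (1+t)/(1-t) by field_simp; ring]
    rw [arctanh]
    ring
  -- numerator
  have hs1 : ‖a‖ * t ≠ 1 := hαt.ne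
  have hs2 : ‖a‖ * (-t) ≠ 1 := by nlinarith
  have hT1 := TMap_smul_unit a ha hs2
  have hT2 := TMap_smul_unit a ha hs1
  set c : ℝ := (-t - ‖a‖) / (1 - ‖a‖ * -t) with hcdef
  set d : ℝ := (t - ‖a‖) / (1 - ‖a‖ * t) with hddef
  have hceq : c = -((t + ‖a‖)/(1 + ‖a‖*t)) := by
    rw [hcdef, show 1 - ‖a‖ * -t = 1 + ‖a‖ * t from by ring, ← neg_div]
    congr 1
    ring
  have habsc : |c| = (t + ‖a‖)/(1 + ‖a‖*t) := by
    rw [hceq, abs_neg, abs_of_pos (by positivity)]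
  have habsc1 : |c| < 1 := by
    rw [habsc, div_lt_one hd2]; nlinarith
  have habsd : |d| < |c| := by
    rw [habsc, hddef, abs_lt]
    constructor
    · rw [← neg_div, div_lt_div_iff₀ hd2 hd1]
      nlinarith
    · rw [div_lt_div_iff₀ hd1 hd2]
      nlinarith
  have habsd1 : |d| < 1 := habsd.trans habsc1
  have hcd : c < d := by
    rw [hceq, hddef, ← neg_div, div_lt_div_iff₀ hd2 hd1]
    nlinarith
  have hnum : jDist (ball (0:F) 1) (TMap a (-(t • (‖a‖⁻¹ • a)))) (TMap a (t • (‖a‖⁻¹ • a)))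
      = 2 * arctanh t + 2 * arctanh (‖a‖ * t) := by
    rw [hneg, hT1, hT2, jDist_smul_unit he habsc1 habsd1]
    rw [max_eq_left habsd.le, habsc]
    rw [abs_of_nonpos (by linarith : c - d ≤ 0)]
    have hna : (1:ℝ) - ‖a‖ ≠ 0 := by linarith
    have hd1' : (1:ℝ) - ‖a‖ * t ≠ 0 := hd1.ne'
    have hd2' : (1:ℝ) + ‖a‖ * t ≠ 0 := hd2.ne'
    have hd1'' : (1:ℝ) - t * ‖a‖ ≠ 0 := by linarith
    have hd2'' : (1:ℝ) + t * ‖a‖ ≠ 0 := by nlinarith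
    have e1 : d - c = 2*t*(1-‖a‖^2)/((1-‖a‖*t)*(1+‖a‖*t)) := by
      rw [hceq, hddef]
      field_simp
      ring
    have e2 : 1 - (t + ‖a‖)/(1 + ‖a‖*t) = (1-t)*(1-‖a‖)/(1+‖a‖*t) := by
      field_simp
      ring
    have hkey : 1 + -(c - d) / (1 - (t + ‖a‖)/(1 + ‖a‖*t))
        = ((1+t)/(1-t)) * ((1 + ‖a‖*t)/(1 - ‖a‖*t)) := by
      rw [show -(c - d) = d - c from by ring, e1, e2, div_div_div_comm]
      field_simp
      ring
    rw [hkey, Real.log_mul (by positivity) (by positivity), arctanh, arctanh]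
    ring
  rw [hnum, hden]
  field_simp

/-- The ratio of `j`-distances of the images under `T_a` of antipodal points
`± t e_a` equals `1 + arctanh(|a| t)/arctanh t`; this is strictly decreasing on `(0,1)` with
range `(1, 1+|a|)`, so the supremum of the ratio is `1 + |a|`. -/
theorem jDist_TMap_antipodal_ratio {n : ℕ} (hn : 2 ≤ n)
    (a : EuclideanSpace ℝ (Fin n)) (ha0 : 0 < ‖a‖) (ha1 : ‖a‖ < 1) :
    (∀ t ∈ Ioo (0 : ℝ) 1,
      jDist (ball (0 : EuclideanSpace ℝ (Fin n)) 1)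
          (TMap a (-(t • (‖a‖⁻¹ • a)))) (TMap a (t • (‖a‖⁻¹ • a))) /
        jDist (ball (0 : EuclideanSpace ℝ (Fin n)) 1) (-(t • (‖a‖⁻¹ • a))) (t • (‖a‖⁻¹ • a)) =
        1 + arctanh (‖a‖ * t) / arctanh t) ∧
    StrictAntiOn (fun t : ℝ => 1 + arctanh (‖a‖ * t) / arctanh t) (Ioo 0 1) ∧
    (fun t : ℝ => 1 + arctanh (‖a‖ * t) / arctanh t) '' Ioo 0 1 =
      Ioo 1 (1 + ‖a‖) ∧
    sSup {r : ℝ | ∃ t ∈ Ioo (0 : ℝ) 1,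
        r = jDist (ball (0 : EuclideanSpace ℝ (Fin n)) 1)
              (TMap a (-(t • (‖a‖⁻¹ • a)))) (TMap a (t • (‖a‖⁻¹ • a))) /
            jDist (ball (0 : EuclideanSpace ℝ (Fin n)) 1)
              (-(t • (‖a‖⁻¹ • a))) (t • (‖a‖⁻¹ • a))} = 1 + ‖a‖ := by
  have ha : a ≠ 0 := norm_pos_iff.mp ha0
  refine ⟨fun t ht => jDist_ratio_eq a ha0 ha1 ht, f_strictAntiOn ha0 ha1, f_image ha0 ha1, ?_⟩
  have hset : {r : ℝ | ∃ t ∈ Ioo (0 : ℝ) 1,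
      r = jDist (ball (0 : EuclideanSpace ℝ (Fin n)) 1)
            (TMap a (-(t • (‖a‖⁻¹ • a)))) (TMap a (t • (‖a‖⁻¹ • a))) /
          jDist (ball (0 : EuclideanSpace ℝ (Fin n)) 1)
            (-(t • (‖a‖⁻¹ • a))) (t • (‖a‖⁻¹ • a))}
      = (fun t : ℝ => 1 + arctanh (‖a‖ * t) / arctanh t) '' Ioo 0 1 := by
    ext r
    simp only [mem_setOf_eq, mem_image]
    constructor
    · rintro ⟨t, ht, rfl⟩
      exact ⟨t, ht, (jDist_ratio_eq a ha0 ha1 ht).symm⟩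
    · rintro ⟨t, ht, rfl⟩
      exact ⟨t, ht, (jDist_ratio_eq a ha0 ha1 ht).symm⟩
  rw [hset, f_image ha0 ha1, csSup_Ioo (by linarith)]
end Geometry
end

section
/- Let r ∈ (0,1). The function f(t) = log(1 + t/(1−r)) / arsinh(t/√((1−r²)(1−(r−t)²))) is strictly decreasing on (0,2r), and maps (0,2r) onto (1, 1+r). -/
open Metric Set Real Filter

noncomputable def atn (x : ℝ) : ℝ := (Real.log (1 + x) - Real.log (1 - x)) / 2

noncomputable def Gfn (r u : ℝ) : ℝ :=
  (Real.log (1 - u) - Real.log (1 - r)) / (atn r - atn u)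

lemma hasDerivAt_atn {x : ℝ} (h1 : -1 < x) (h2 : x < 1) :
    HasDerivAt atn (1 / (1 - x ^ 2)) x := by
  have hp : (1 : ℝ) + x ≠ 0 := by linarith
  have hm : (1 : ℝ) - x ≠ 0 := by linarith
  have hne : (1 : ℝ) - x ^ 2 ≠ 0 := by nlinarith
  have hplus : HasDerivAt (fun x : ℝ => Real.log (1 + x)) (1 / (1 + x)) x :=
    ((hasDerivAt_id x).const_add 1).log (by simp only [id_eq]; intro hh; linarith)
  have hminus : HasDerivAt (fun x : ℝ => Real.log (1 - x)) ((-1) / (1 - x)) x :=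
    ((hasDerivAt_id x).const_sub 1).log (by simp only [id_eq]; intro hh; linarith)
  have h2d := (hplus.sub hminus).div_const 2
  convert h2d using 1 <;> try rfl
  all_goals field_simp
  all_goals ring

lemma hasDerivAt_log_one_sub {x : ℝ} (h : x < 1) :
    HasDerivAt (fun x : ℝ => Real.log (1 - x)) ((-1) / (1 - x)) x :=
  ((hasDerivAt_id x).const_sub 1).log (by simp only [id_eq]; intro hh; linarith)

lemma cauchy_aux {a b : ℝ} (ha : -1 < a) (hab : a < b) (hb : b < 1) :
    ∃ c ∈ Ioo a b,
      Real.log (1 - a) - Real.log (1 - b) = (atn b - atn a) * (1 + c) := by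
  have hsub : Icc a b ⊆ Ioo (-1 : ℝ) 1 := fun x hx => ⟨by linarith [hx.1], by linarith [hx.2]⟩
  have hfc : ContinuousOn (fun x : ℝ => Real.log (1 - x)) (Icc a b) := fun x hx =>
    (hasDerivAt_log_one_sub (hsub hx).2).continuousAt.continuousWithinAt
  have hgc : ContinuousOn atn (Icc a b) := fun x hx =>
    (hasDerivAt_atn (hsub hx).1 (hsub hx).2).continuousAt.continuousWithinAt
  obtain ⟨c, hc, heq⟩ := exists_ratio_hasDerivAt_eq_ratio_slope
    (fun x : ℝ => Real.log (1 - x)) (fun x => (-1) / (1 - x)) hab hfc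
    (fun x hx => hasDerivAt_log_one_sub (hsub (Ioo_subset_Icc_self hx)).2)
    atn (fun x => 1 / (1 - x ^ 2)) hgc
    (fun x hx => hasDerivAt_atn (hsub (Ioo_subset_Icc_self hx)).1
      (hsub (Ioo_subset_Icc_self hx)).2)
  refine ⟨c, hc, ?_⟩
  have h1 : (0 : ℝ) < 1 - c := by linarith [hc.2]
  have h2 : (0 : ℝ) < 1 + c := by linarith [hc.1]
  have h3 : (1 : ℝ) - c ^ 2 ≠ 0 := by nlinarith
  field_simp at heq
  nlinarith [heq]

lemma atn_lt {a b : ℝ} (ha : -1 < a) (hab : a < b) (hb : b < 1) : atn a < atn b := by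
  obtain ⟨c, hc, heq⟩ := cauchy_aux ha hab hb
  have hlog : Real.log (1 - b) < Real.log (1 - a) :=
    Real.log_lt_log (by linarith) (by linarith)
  nlinarith [hc.1]

lemma Gfn_val {r u : ℝ} (hr : r < 1) (hu : -1 < u) (hur : u < r) :
    ∃ c ∈ Ioo u r, Gfn r u = 1 + c := by
  obtain ⟨c, hc, heq⟩ := cauchy_aux hu hur hr
  have hA : 0 < atn r - atn u := by linarith [atn_lt hu hur hr]
  exact ⟨c, hc, by rw [Gfn, heq]; exact mul_div_cancel_left₀ _ hA.ne'⟩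

lemma Gfn_neg_r {r : ℝ} (hr0 : 0 < r) (hr1 : r < 1) : Gfn r (-r) = 1 := by
  have h : atn (-r) = -atn r := by
    simp only [atn]
    rw [show (1:ℝ) + -r = 1 - r by ring, show (1:ℝ) - -r = 1 + r by ring]
    ring
  have hpos : 0 < Real.log (1 + r) - Real.log (1 - r) := by
    have := Real.log_lt_log (by linarith : (0:ℝ) < 1 - r) (by linarith : (1:ℝ) - r < 1 + r)
    linarith
  rw [Gfn, h, show (1 : ℝ) - -r = 1 + r by ring,
    show atn r - -atn r = Real.log (1 + r) - Real.log (1 - r) by simp only [atn]; ring]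
  exact div_self hpos.ne'

lemma Gfn_mono {r u₁ u₂ : ℝ} (h1 : -1 < u₁) (h12 : u₁ < u₂) (h2r : u₂ < r) (hr : r < 1) :
    Gfn r u₁ < Gfn r u₂ := by
  obtain ⟨c₁, hc₁, he₁⟩ := cauchy_aux h1 h12 (by linarith)
  obtain ⟨c₂, hc₂, he₂⟩ := cauchy_aux (by linarith : (-1:ℝ) < u₂) h2r hr
  have hA₁ : 0 < atn u₂ - atn u₁ := by linarith [atn_lt h1 h12 (by linarith : u₂ < 1)]
  have hA₂ : 0 < atn r - atn u₂ := by linarith [atn_lt (by linarith : (-1:ℝ) < u₂) h2r hr]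
  have hG₂ : Gfn r u₂ = 1 + c₂ := by
    rw [Gfn, he₂]; exact mul_div_cancel_left₀ _ hA₂.ne'
  have hnum : Real.log (1 - u₁) - Real.log (1 - r)
      = (atn u₂ - atn u₁) * (1 + c₁) + (atn r - atn u₂) * (1 + c₂) := by linarith
  have hden : atn r - atn u₁ = (atn u₂ - atn u₁) + (atn r - atn u₂) := by ring
  rw [Gfn, hnum, hden, hG₂, div_lt_iff₀ (by linarith)]
  nlinarith [hc₁.2, hc₂.1]

lemma arsinh_eq {r u : ℝ} (hr1 : -1 < r) (hr2 : r < 1) (hu1 : -1 < u) (hu2 : u < 1) :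
    Real.arsinh ((r - u) / Real.sqrt ((1 - r ^ 2) * (1 - u ^ 2))) = atn r - atn u := by
  set P : ℝ := (1 + r) * (1 - u) with hPdef
  set Q : ℝ := (1 - r) * (1 + u) with hQdef
  have hP : 0 < P := by rw [hPdef]; nlinarith
  have hQ : 0 < Q := by rw [hQdef]; nlinarith
  have hy : atn r - atn u = (Real.log P - Real.log Q) / 2 := by
    rw [hPdef, hQdef, Real.log_mul (by linarith) (by linarith),
      Real.log_mul (by linarith) (by linarith), atn, atn]
    ring
  have hprod : (1 - r ^ 2) * (1 - u ^ 2) = P * Q := by rw [hPdef, hQdef]; ring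
  set p : ℝ := Real.sqrt P with hpdef
  set q : ℝ := Real.sqrt Q with hqdef
  have hp : 0 < p := Real.sqrt_pos.2 hP
  have hq : 0 < q := Real.sqrt_pos.2 hQ
  have hp2 : p ^ 2 = P := Real.sq_sqrt hP.le
  have hq2 : q ^ 2 = Q := Real.sq_sqrt hQ.le
  have hexp1 : Real.exp ((Real.log P - Real.log Q) / 2) = p / q := by
    rw [Real.exp_half, Real.exp_sub, Real.exp_log hP, Real.exp_log hQ,
      Real.sqrt_div hP.le]
  have hexp2 : Real.exp (-((Real.log P - Real.log Q) / 2)) = q / p := by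
    rw [show -((Real.log P - Real.log Q) / 2) = (Real.log Q - Real.log P) / 2 by ring,
      Real.exp_half, Real.exp_sub, Real.exp_log hP, Real.exp_log hQ,
      Real.sqrt_div hQ.le]
  have hPQ : P - Q = 2 * (r - u) := by rw [hPdef, hQdef]; ring
  have hs : Real.sinh ((Real.log P - Real.log Q) / 2)
      = (r - u) / Real.sqrt (P * Q) := by
    rw [Real.sinh_eq, hexp1, hexp2, Real.sqrt_mul hP.le, ← hpdef, ← hqdef]
    rw [div_sub_div _ _ hq.ne' hp.ne', div_div]
    rw [show p * p - q * q = p ^ 2 - q ^ 2 by ring, hp2, hq2]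
    rw [div_eq_div_iff (by positivity) (by positivity)]
    linear_combination (p * q) * hPQ
  rw [hprod, hy, ← hs, Real.arsinh_sinh]

/-- For `r ∈ (0,1)`, the function
`t ↦ log(1 + t/(1-r)) / arsinh(t / √((1-r²)(1-(r-t)²)))` is strictly decreasing on `(0, 2r)`
and maps `(0, 2r)` onto `(1, 1+r)`. -/
theorem log_div_arsinh_strictAnti (r : ℝ) (hr : r ∈ Ioo (0 : ℝ) 1) :
    StrictAntiOn (fun t : ℝ =>
        Real.log (1 + t / (1 - r)) /
          Real.arsinh (t / Real.sqrt ((1 - r ^ 2) * (1 - (r - t) ^ 2)))) (Ioo 0 (2 * r)) ∧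
    (fun t : ℝ =>
        Real.log (1 + t / (1 - r)) /
          Real.arsinh (t / Real.sqrt ((1 - r ^ 2) * (1 - (r - t) ^ 2)))) '' Ioo 0 (2 * r) =
      Ioo 1 (1 + r) := by
  obtain ⟨hr0, hr1⟩ := hr
  have hr1' : (0 : ℝ) < 1 - r := by linarith
  have hfeq : ∀ t ∈ Ioo (0 : ℝ) (2 * r),
      Real.log (1 + t / (1 - r)) /
          Real.arsinh (t / Real.sqrt ((1 - r ^ 2) * (1 - (r - t) ^ 2)))
        = Gfn r (r - t) := by
    intro t ht
    obtain ⟨ht0, ht2⟩ := ht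
    have hu1 : (-1 : ℝ) < r - t := by linarith
    have hu2 : r - t < 1 := by linarith
    have hlog : Real.log (1 + t / (1 - r))
        = Real.log (1 - (r - t)) - Real.log (1 - r) := by
      rw [show (1 : ℝ) + t / (1 - r) = (1 - (r - t)) / (1 - r) by field_simp; ring,
        Real.log_div (by linarith) (by linarith)]
    have har : Real.arsinh (t / Real.sqrt ((1 - r ^ 2) * (1 - (r - t) ^ 2)))
        = atn r - atn (r - t) := by
      have h := arsinh_eq (by linarith : (-1:ℝ) < r) hr1 hu1 hu2
      rw [show r - (r - t) = t by ring] at h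
      exact h
    rw [hlog, har, Gfn]
  constructor
  · intro t₁ h₁ t₂ h₂ hlt
    calc (fun t : ℝ => Real.log (1 + t / (1 - r)) /
          Real.arsinh (t / Real.sqrt ((1 - r ^ 2) * (1 - (r - t) ^ 2)))) t₂
        = Gfn r (r - t₂) := hfeq t₂ h₂
      _ < Gfn r (r - t₁) := Gfn_mono (by linarith [h₂.2] : (-1:ℝ) < r - t₂) (by linarith)
          (by linarith [h₁.1]) hr1
      _ = _ := (hfeq t₁ h₁).symm
  · rw [Set.image_congr hfeq]
    ext y
    simp only [Set.mem_image, Set.mem_Ioo]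
    constructor
    · rintro ⟨t, ⟨ht0, ht2⟩, rfl⟩
      have hu1 : (-1 : ℝ) < r - t := by linarith
      have hur : r - t < r := by linarith
      constructor
      · have := Gfn_mono (by linarith : (-1:ℝ) < -r) (by linarith : -r < r - t) hur hr1
        rw [Gfn_neg_r hr0 hr1] at this
        exact this
      · obtain ⟨c, hc, hval⟩ := Gfn_val hr1 hu1 hur
        rw [hval]
        linarith [hc.2]
    · rintro ⟨hy1, hy2⟩
      set u₂ : ℝ := y - 1 with hu₂def
      have hu₂0 : 0 < u₂ := by rw [hu₂def]; linarith
      have hu₂r : u₂ < r := by rw [hu₂def]; linarith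
      have hGu₂ : y < Gfn r u₂ := by
        obtain ⟨c, hc, hval⟩ := Gfn_val hr1 (by linarith) hu₂r
        rw [hval]
        have h5 := hc.1
        rw [hu₂def] at h5
        linarith
      have hGc : ContinuousOn (Gfn r) (Icc (-r) u₂) := by
        apply ContinuousOn.div
        · intro x hx
          have hx1 : (-1 : ℝ) < x := by linarith [hx.1]
          have hx2 : x < 1 := by linarith [hx.2]
          exact ((hasDerivAt_log_one_sub hx2).continuousAt.sub
            continuousAt_const).continuousWithinAt
        · intro x hx
          have hx1 : (-1 : ℝ) < x := by linarith [hx.1]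
          have hx2 : x < 1 := by linarith [hx.2]
          exact (continuousAt_const.sub
            (hasDerivAt_atn hx1 hx2).continuousAt).continuousWithinAt
        · intro x hx
          have hx1 : (-1 : ℝ) < x := by linarith [hx.1]
          have hxr : x < r := lt_of_le_of_lt hx.2 hu₂r
          have := atn_lt hx1 hxr hr1
          intro habs
          rw [sub_eq_zero] at habs
          linarith [habs ▸ this]
      have hivt := intermediate_value_Icc (by linarith : -r ≤ u₂) hGc
      have hymem : y ∈ Icc (Gfn r (-r)) (Gfn r u₂) := by
        rw [Gfn_neg_r hr0 hr1]
        exact ⟨le_of_lt hy1, le_of_lt hGu₂⟩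
      obtain ⟨u, hu, hGu⟩ := hivt hymem
      have hune : u ≠ -r := by
        intro h
        rw [h, Gfn_neg_r hr0 hr1] at hGu
        linarith
      have hu1 : -r < u := lt_of_le_of_ne hu.1 (Ne.symm hune)
      refine ⟨r - u, ⟨by linarith [hu.2], by linarith⟩, ?_⟩
      rw [show r - (r - u) = u by ring]
      exact hGu
end

section
/- Let a ≥ 0. Then the maximum of (r+s+a)²/((1+r²)(1+s²)) over all r,s ∈ [0,∞) equals ((a+√(4+a²))/2)², and it is attained at r = s = (−a+√(4+a²))/2. -/
open Metric Set Real Filter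

/-- For `a ≥ 0`, the maximum of `(r+s+a)²/((1+r²)(1+s²))` over `r, s ≥ 0`
equals `((a+√(4+a²))/2)²`, attained at `r = s = (-a+√(4+a²))/2`. -/
theorem max_ratio_formula (a : ℝ) (ha : 0 ≤ a) :
    (∀ r s : ℝ, 0 ≤ r → 0 ≤ s →
      (r + s + a) ^ 2 / ((1 + r ^ 2) * (1 + s ^ 2)) ≤ ((a + Real.sqrt (4 + a ^ 2)) / 2) ^ 2) ∧
    ((-a + Real.sqrt (4 + a ^ 2)) / 2 + (-a + Real.sqrt (4 + a ^ 2)) / 2 + a) ^ 2 /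
        ((1 + ((-a + Real.sqrt (4 + a ^ 2)) / 2) ^ 2) *
          (1 + ((-a + Real.sqrt (4 + a ^ 2)) / 2) ^ 2)) =
      ((a + Real.sqrt (4 + a ^ 2)) / 2) ^ 2 := by
  set t := Real.sqrt (4 + a ^ 2) with htdef
  have ht0 : 0 ≤ t := Real.sqrt_nonneg _
  have ht2 : t ^ 2 = 4 + a ^ 2 := Real.sq_sqrt (by positivity)
  have hta : a < t := by nlinarith
  have ht0' : 0 < t := lt_of_le_of_lt ha hta
  constructor
  · intro r s hr hs
    set u : ℝ := (a + t) / 2 with hudef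
    have hu0 : 0 < u := by rw [hudef]; linarith
    have hu : u ^ 2 = 1 + a * u := by rw [hudef]; linear_combination (1/4 : ℝ) * ht2
    have hden : 0 < (1 + r ^ 2) * (1 + s ^ 2) := by positivity
    rw [div_le_iff₀ hden]
    have hid : u * (u ^ 2 * (1 + s ^ 2) - (1 + (s + a) ^ 2)) = a * (u * s - 1) ^ 2 := by
      linear_combination (u * (1 + s ^ 2)) * hu + (a/4) * ht2
    have key2 : 1 + (s + a) ^ 2 ≤ u ^ 2 * (1 + s ^ 2) := by
      nlinarith [hid, mul_nonneg ha (sq_nonneg (u * s - 1)), hu0]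
    have key1 : (r + s + a) ^ 2 ≤ (1 + r ^ 2) * (1 + (s + a) ^ 2) := by
      nlinarith [sq_nonneg (r * (s + a) - 1)]
    have hr2 : (0:ℝ) ≤ 1 + r ^ 2 := by positivity
    calc (r + s + a) ^ 2 ≤ (1 + r ^ 2) * (1 + (s + a) ^ 2) := key1
      _ ≤ (1 + r ^ 2) * (u ^ 2 * (1 + s ^ 2)) := by
          exact mul_le_mul_of_nonneg_left key2 hr2
      _ = u ^ 2 * ((1 + r ^ 2) * (1 + s ^ 2)) := by ring
  · have h2 : (-a + t) / 2 + (-a + t) / 2 + a = t := by ring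
    have h1 : 1 + ((-a + t) / 2) ^ 2 = t * (t - a) / 2 := by
      linear_combination (-1/4 : ℝ) * ht2
    rw [h2, h1]
    have hne : t * (t - a) / 2 * (t * (t - a) / 2) ≠ 0 := by
      have : 0 < t * (t - a) / 2 := by
        apply div_pos (mul_pos ht0' (by linarith)) (by norm_num)
      positivity
    rw [div_eq_iff hne]
    linear_combination (-(t ^ 2 * (t ^ 2 - a ^ 2 + 4)) / 16) * ht2
end

section
/- Let n ≥ 2, z ∈ ℝⁿ, and x, y ∈ ℝⁿ∖{z}. Then k_{ℝⁿ∖{z}}(x,y) = √(θ² + (log(|x−z|/|y−z|))²), where θ = ∠(x,z,y) ∈ [0,π] is the angle at z between the vectors x−z and y−z. -/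
open Metric Set Real Filter intervalIntegral

noncomputable section

namespace QHAux

local notation "⟪" x ", " y "⟫" => @inner ℝ _ _ x y

lemma arccos_le_arccos' {x y : ℝ} (hx : -1 ≤ x) (hxy : x ≤ y) :
    Real.arccos y ≤ Real.arccos x := by
  rcases le_or_gt y 1 with h | h
  · rcases eq_or_lt_of_le hxy with rfl | hlt
    · exact le_rfl
    · exact (Real.strictAntiOn_arccos ⟨hx, hxy.trans h⟩ ⟨hx.trans hxy, h⟩ hlt).le
  · have h0 : Real.arccos y = 0 := Real.arccos_eq_zero.2 h.le
    rw [h0]; exact Real.arccos_nonneg x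

variable {E : Type*} [NormedAddCommGroup E] [InnerProductSpace ℝ E]

lemma inner_le_one {a b : E} (ha : ‖a‖ = 1) (hb : ‖b‖ = 1) : ⟪a, b⟫ ≤ 1 := by
  have := real_inner_le_norm a b
  rwa [ha, hb, one_mul] at this

lemma neg_one_le_inner {a b : E} (ha : ‖a‖ = 1) (hb : ‖b‖ = 1) : -1 ≤ ⟪a, b⟫ := by
  have := abs_real_inner_le_norm a b
  rw [ha, hb, one_mul] at this
  linarith [neg_abs_le (⟪a, b⟫)]

lemma norm_sub_proj {a b : E} (ha : ‖a‖ = 1) (hb : ‖b‖ = 1) :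
    ‖a - ⟪a, b⟫ • b‖ = Real.sqrt (1 - ⟪a, b⟫ ^ 2) := by
  have h2 : ‖a - ⟪a, b⟫ • b‖ ^ 2 = 1 - ⟪a, b⟫ ^ 2 := by
    rw [norm_sub_sq_real, norm_smul, real_inner_smul_right, ha, hb]
    simp only [Real.norm_eq_abs, mul_one, one_pow]
    rw [sq_abs]
    ring
  rw [← h2, Real.sqrt_sq (norm_nonneg _)]

/-- Triangle inequality for angles between unit vectors. -/
lemma arccos_inner_triangle {a b c : E} (ha : ‖a‖ = 1) (hb : ‖b‖ = 1) (hc : ‖c‖ = 1) :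
    Real.arccos ⟪a, c⟫ ≤ Real.arccos ⟪a, b⟫ + Real.arccos ⟪b, c⟫ := by
  set α := Real.arccos ⟪a, b⟫ with hα
  set β := Real.arccos ⟪b, c⟫ with hβ
  have hca : Real.cos α = ⟪a, b⟫ := Real.cos_arccos (neg_one_le_inner ha hb) (inner_le_one ha hb)
  have hcb : Real.cos β = ⟪b, c⟫ := Real.cos_arccos (neg_one_le_inner hb hc) (inner_le_one hb hc)
  have hsa : Real.sin α = ‖a - ⟪a, b⟫ • b‖ := by
    rw [hα, Real.sin_arccos, ← norm_sub_proj ha hb]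
  have hsb : Real.sin β = ‖c - ⟪b, c⟫ • b‖ := by
    rw [hβ, Real.sin_arccos, real_inner_comm c b, ← norm_sub_proj hc hb]
  have key : Real.cos (α + β) ≤ ⟪a, c⟫ := by
    have hpq : ⟪a, c⟫ = ⟪a, b⟫ * ⟪b, c⟫ + ⟪a - ⟪a, b⟫ • b, c - ⟪b, c⟫ • b⟫ := by
      have hbb : ⟪b, b⟫ = 1 := by
        rw [real_inner_self_eq_norm_sq, hb]; norm_num
      simp only [inner_sub_left, inner_sub_right, real_inner_smul_left, real_inner_smul_right, hbb]
      rw [real_inner_comm b a]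
      ring
    have habs : |⟪a - ⟪a, b⟫ • b, c - ⟪b, c⟫ • b⟫| ≤ ‖a - ⟪a, b⟫ • b‖ * ‖c - ⟪b, c⟫ • b‖ :=
      abs_real_inner_le_norm _ _
    rw [Real.cos_add, hca, hcb, hsa, hsb]
    have hneg := neg_abs_le (⟪a - ⟪a, b⟫ • b, c - ⟪b, c⟫ • b⟫)
    linarith
  have h1 : Real.arccos ⟪a, c⟫ ≤ Real.arccos (Real.cos (α + β)) :=
    arccos_le_arccos' (Real.neg_one_le_cos _) key
  rcases le_or_gt (α + β) Real.pi with h | h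
  · rwa [Real.arccos_cos (add_nonneg (Real.arccos_nonneg _) (Real.arccos_nonneg _)) h] at h1
  · linarith [Real.arccos_le_pi (⟪a, c⟫ : ℝ)]

/-- Chord-to-arc bound. -/
lemma arccos_chord {d : ℝ} (h0 : 0 ≤ d) (h1 : d ≤ 1/2) :
    Real.arccos (1 - d ^ 2 / 2) ≤ d + d ^ 3 := by
  have hd3 : d ^ 3 ≤ (1/2) ^ 3 := pow_le_pow_left₀ h0 h1 3
  have hs0 : 0 ≤ d + d ^ 3 := by positivity
  have hs1 : d + d ^ 3 ≤ 1 := by nlinarith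
  have hcb := Real.cos_bound (x := d + d ^ 3) (by rw [abs_of_nonneg hs0]; exact hs1)
  have hcos : Real.cos (d + d ^ 3) ≤ 1 - d ^ 2 / 2 := by
    rw [abs_of_nonneg hs0] at hcb
    have h2 := (abs_le.1 hcb).2
    have e : (d + d ^ 3) ^ 4 = d ^ 4 * (1 + d ^ 2) ^ 4 := by ring
    have hb4 : (1 + d ^ 2) ^ 4 ≤ (5/4 : ℝ) ^ 4 :=
      pow_le_pow_left₀ (by positivity) (by nlinarith) 4
    have hkey : (d + d ^ 3) ^ 4 * (5 / 96) ≤ d ^ 4 := by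
      rw [e]; nlinarith [pow_nonneg h0 4]
    nlinarith [pow_nonneg h0 6]
  have hle := arccos_le_arccos' (Real.neg_one_le_cos (d + d ^ 3)) hcos
  have hπ : d + d ^ 3 ≤ Real.pi := hs1.trans (by linarith [Real.pi_gt_three])
  rwa [Real.arccos_cos hs0 hπ] at hle

lemma cauchy_pt {p q x y : ℝ} (hpq : p ^ 2 + q ^ 2 = 1) :
    p * x + q * y ≤ Real.sqrt (x ^ 2 + y ^ 2) := by
  have hs0 : 0 ≤ Real.sqrt (x ^ 2 + y ^ 2) := Real.sqrt_nonneg _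
  have hs2 : Real.sqrt (x ^ 2 + y ^ 2) ^ 2 = x ^ 2 + y ^ 2 :=
    Real.sq_sqrt (by positivity)
  nlinarith [sq_nonneg (q * x - p * y), sq_nonneg (Real.sqrt (x ^ 2 + y ^ 2) - (p * x + q * y)),
    sq_nonneg (Real.sqrt (x ^ 2 + y ^ 2) + (p * x + q * y))]

/-- Scalar Minkowski-type inequality for interval integrals. -/
lemma minkowski_integral {a b : ℝ → ℝ} (ha : ContinuousOn a (Icc (0:ℝ) 1))
    (hb : ContinuousOn b (Icc (0:ℝ) 1)) :
    Real.sqrt ((∫ t in (0:ℝ)..1, a t) ^ 2 + (∫ t in (0:ℝ)..1, b t) ^ 2) ≤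
      ∫ t in (0:ℝ)..1, Real.sqrt (a t ^ 2 + b t ^ 2) := by
  have h01 : (0:ℝ) ≤ 1 := zero_le_one
  have hIcc : uIcc (0:ℝ) 1 = Icc 0 1 := uIcc_of_le h01
  have hai : IntervalIntegrable a MeasureTheory.volume 0 1 :=
    (ha.mono (by rw [hIcc])).intervalIntegrable
  have hbi : IntervalIntegrable b MeasureTheory.volume 0 1 :=
    (hb.mono (by rw [hIcc])).intervalIntegrable
  have hsc : ContinuousOn (fun t => Real.sqrt (a t ^ 2 + b t ^ 2)) (Icc (0:ℝ) 1) :=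
    (Real.continuous_sqrt.comp_continuousOn (((ha.pow 2).add (hb.pow 2))))
  have hsi : IntervalIntegrable (fun t => Real.sqrt (a t ^ 2 + b t ^ 2))
      MeasureTheory.volume 0 1 := (hsc.mono (by rw [hIcc])).intervalIntegrable
  set A := ∫ t in (0:ℝ)..1, a t with hA
  set B := ∫ t in (0:ℝ)..1, b t with hB
  rcases eq_or_lt_of_le (Real.sqrt_nonneg (A ^ 2 + B ^ 2)) with h0 | hpos
  · rw [← h0]
    apply intervalIntegral.integral_nonneg h01
    intro t _; exact Real.sqrt_nonneg _
  · set N := Real.sqrt (A ^ 2 + B ^ 2) with hN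
    have hN2 : N ^ 2 = A ^ 2 + B ^ 2 := Real.sq_sqrt (by positivity)
    have hpq : (A / N) ^ 2 + (B / N) ^ 2 = 1 := by
      field_simp
      linarith [hN2]
    have hpt : ∀ t ∈ Icc (0:ℝ) 1,
        (A / N) * a t + (B / N) * b t ≤ Real.sqrt (a t ^ 2 + b t ^ 2) :=
      fun t _ => cauchy_pt hpq
    have hint : ∫ t in (0:ℝ)..1, ((A / N) * a t + (B / N) * b t) ≤
        ∫ t in (0:ℝ)..1, Real.sqrt (a t ^ 2 + b t ^ 2) := by
      apply intervalIntegral.integral_mono_on h01 _ hsi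
      · intro t ht; exact hpt t ht
      · exact (hai.const_mul _).add (hbi.const_mul _)
    have hval : ∫ t in (0:ℝ)..1, ((A / N) * a t + (B / N) * b t) = N := by
      rw [intervalIntegral.integral_add (hai.const_mul _) (hbi.const_mul _),
        intervalIntegral.integral_const_mul, intervalIntegral.integral_const_mul, ← hA, ← hB]
      field_simp
      linarith [hN2]
    linarith [hint, hval.symm.le]

variable {E : Type*} [NormedAddCommGroup E] [InnerProductSpace ℝ E] [CompleteSpace E]

/-- The angle between endpoints of a C¹ curve on the unit sphere is at most its length. -/
lemma arccos_le_length {u U : ℝ → E} (hu : ContinuousOn u (Icc 0 1))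
    (hU : ContinuousOn U (Icc 0 1)) (hunit : ∀ t ∈ Icc (0:ℝ) 1, ‖u t‖ = 1)
    (hder : ∀ t ∈ Ioo (0:ℝ) 1, HasDerivAt u (U t) t) :
    Real.arccos ⟪u 0, u 1⟫ ≤ ∫ t in (0:ℝ)..1, ‖U t‖ := by
  -- bound on ‖U‖
  obtain ⟨M0, hM0⟩ := (isCompact_Icc : IsCompact (Icc (0:ℝ) 1)).exists_bound_of_continuousOn hU
  set M : ℝ := max M0 1 with hM
  have hM1 : (1:ℝ) ≤ M := le_max_right _ _
  have hMpos : 0 < M := lt_of_lt_of_le one_pos hM1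
  have hMb : ∀ t ∈ Icc (0:ℝ) 1, ‖U t‖ ≤ M := fun t ht => (hM0 t ht).trans (le_max_left _ _)
  -- integrability on subintervals
  have hUi : ∀ {s t : ℝ}, 0 ≤ s → t ≤ 1 → s ≤ t →
      IntervalIntegrable (fun τ => ‖U τ‖) MeasureTheory.volume s t := by
    intro s t hs ht hst
    apply ContinuousOn.intervalIntegrable
    apply (hU.norm).mono
    rw [uIcc_of_le hst]
    exact Icc_subset_Icc hs ht
  -- the primitive
  set Λ : ℝ → ℝ := fun t => ∫ τ in (0:ℝ)..t, ‖U τ‖ with hΛ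
  have hΛdiff : ∀ {s t : ℝ}, 0 ≤ s → s ≤ t → t ≤ 1 →
      Λ t - Λ s = ∫ τ in s..t, ‖U τ‖ := by
    intro s t hs hst ht
    have h1 := intervalIntegral.integral_add_adjacent_intervals
      (hUi le_rfl (hst.trans ht) hs) (hUi hs ht hst)
    rw [hΛ]; simp only []
    linarith [h1]
  -- chord bound
  have chord : ∀ {s t : ℝ}, 0 ≤ s → s ≤ t → t ≤ 1 →
      ‖u t - u s‖ ≤ Λ t - Λ s := by
    intro s t hs hst ht
    have hftc : ∫ τ in s..t, U τ = u t - u s := by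
      apply intervalIntegral.integral_eq_sub_of_hasDeriv_right_of_le hst
      · exact hu.mono (Icc_subset_Icc hs ht)
      · intro x hx
        exact (hder x ⟨lt_of_le_of_lt hs hx.1, lt_of_lt_of_le hx.2 ht⟩).hasDerivWithinAt
      · apply ContinuousOn.intervalIntegrable
        apply hU.mono
        rw [uIcc_of_le hst]
        exact Icc_subset_Icc hs ht
    rw [← hftc, hΛdiff hs hst ht]
    exact intervalIntegral.norm_integral_le_integral_norm hst
  have hΛlip : ∀ {s t : ℝ}, 0 ≤ s → s ≤ t → t ≤ 1 → Λ t - Λ s ≤ M * (t - s) := by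
    intro s t hs hst ht
    rw [hΛdiff hs hst ht]
    calc ∫ τ in s..t, ‖U τ‖ ≤ ∫ τ in s..t, M := by
          apply intervalIntegral.integral_mono_on hst (hUi hs ht hst)
            intervalIntegrable_const
          intro τ hτ; exact hMb τ ⟨hs.trans hτ.1, hτ.2.trans ht⟩
      _ = M * (t - s) := by rw [intervalIntegral.integral_const, smul_eq_mul, mul_comm]
  have hΛmono : ∀ {s t : ℝ}, 0 ≤ s → s ≤ t → t ≤ 1 → Λ s ≤ Λ t := by
    intro s t hs hst ht
    have := hΛdiff hs hst ht
    have hnn : 0 ≤ ∫ τ in s..t, ‖U τ‖ :=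
      intervalIntegral.integral_nonneg hst (fun τ _ => norm_nonneg _)
    linarith
  -- continuity of Λ on Icc
  have hΛcont : ContinuousOn Λ (Icc 0 1) := by
    have hlip : LipschitzOnWith (Real.toNNReal M) Λ (Icc 0 1) := by
      apply LipschitzOnWith.of_dist_le_mul
      intro s hs t ht
      have hcoe : ((Real.toNNReal M : NNReal) : ℝ) = M := Real.coe_toNNReal _ hMpos.le
      rw [Real.dist_eq, Real.dist_eq, hcoe]
      rcases le_total s t with h | h
      · have h1 := hΛmono hs.1 h ht.2
        have h2 := hΛlip hs.1 h ht.2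
        rw [abs_of_nonpos (by linarith), abs_of_nonpos (by linarith)]
        linarith
      · have h1 := hΛmono ht.1 h hs.2
        have h2 := hΛlip ht.1 h hs.2
        rw [abs_of_nonneg (by linarith), abs_of_nonneg (by linarith)]
        linarith
    exact hlip.continuousOn
  -- main continuous induction
  have main : ∀ ε : ℝ, 0 < ε →
      Real.arccos ⟪u 0, u 1⟫ ≤ (1 + ε) * Λ 1 + ε := by
    intro ε hε
    set A : ℝ → ℝ := fun t => Real.arccos ⟪u 0, u t⟫ with hA
    have hAcont : ContinuousOn A (Icc 0 1) :=
      Real.continuous_arccos.comp_continuousOn ((continuous_const.continuousOn).inner hu)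
    set S : Set ℝ := {t | A t ≤ (1 + ε) * Λ t + ε * t} with hS
    have hscl : IsClosed (S ∩ Icc 0 1) := by
      rw [inter_comm]
      have : Icc (0:ℝ) 1 ∩ S =
          Icc (0:ℝ) 1 ∩ (fun t => (1 + ε) * Λ t + ε * t - A t) ⁻¹' (Ici 0) := by
        ext t; simp [hS, sub_nonneg]
      rw [this]
      exact ContinuousOn.preimage_isClosed_of_isClosed
        ((((continuousOn_const.mul hΛcont).add (continuousOn_const.mul continuousOn_id)).sub
          hAcont)) isClosed_Icc isClosed_Ici
    have h0S : (0:ℝ) ∈ S := by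
      have : A 0 = 0 := by
        rw [hA]
        simp only []
        have : ⟪u 0, u 0⟫ = 1 := by
          rw [real_inner_self_eq_norm_sq, hunit 0 (by simp [zero_le_one])]
          norm_num
        rw [this, Real.arccos_one]
      rw [hS]
      simp only [mem_setOf_eq, this]
      have hΛ0 : Λ 0 = 0 := by rw [hΛ]; simp
      rw [hΛ0]
      simp
    have hstep : ∀ t ∈ S ∩ Ico (0:ℝ) 1, ∀ y ∈ Ioi t, (S ∩ Ioc t y).Nonempty := by
      intro t ht y hy
      set δ : ℝ := min (min (1/(2*M)) (Real.sqrt (ε / M^3))) (min (y - t) (1 - t)) with hδ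
      have hδpos : 0 < δ := by
        apply lt_min
        · apply lt_min
          · positivity
          · apply Real.sqrt_pos.2; positivity
        · exact lt_min (by simpa using hy) (by linarith [ht.2.2])
      set s : ℝ := t + δ with hs
      have hts : t < s := by linarith
      have hs1 : s ≤ 1 := by
        have : δ ≤ 1 - t := (min_le_right _ _).trans (min_le_right _ _)
        linarith
      have hsy : s ≤ y := by
        have : δ ≤ y - t := (min_le_right _ _).trans (min_le_left _ _)
        linarith
      have ht0 : 0 ≤ t := ht.2.1
      refine ⟨s, ?_, hts, hsy⟩
      -- show s ∈ S
      have hd : ‖u s - u t‖ ≤ Λ s - Λ t := chord ht0 hts.le hs1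
      have hdM : ‖u s - u t‖ ≤ M * δ := by
        have := hΛlip ht0 hts.le hs1
        have h2 : s - t = δ := by rw [hs]; ring
        rw [h2] at this
        linarith
      have hd12 : ‖u s - u t‖ ≤ 1/2 := by
        have hδ1 : δ ≤ 1/(2*M) := (min_le_left _ _).trans (min_le_left _ _)
        have : M * δ ≤ M * (1/(2*M)) := by
          apply mul_le_mul_of_nonneg_left hδ1 hMpos.le
        have heq : M * (1/(2*M)) = 1/2 := by field_simp
        linarith
      -- inner product of u t and u s
      have hinner : ⟪u t, u s⟫ = 1 - ‖u s - u t‖ ^ 2 / 2 := by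
        have hns : ‖u s - u t‖ ^ 2 = 2 - 2 * ⟪u t, u s⟫ := by
          rw [norm_sub_sq_real, hunit s ⟨by linarith, hs1⟩, hunit t ⟨ht0, by linarith [hs1]⟩]
          rw [real_inner_comm (u s) (u t)]
          ring
        linarith
      have hangle : Real.arccos ⟪u t, u s⟫ ≤ ‖u s - u t‖ + ‖u s - u t‖ ^ 3 := by
        rw [hinner]
        exact arccos_chord (norm_nonneg _) hd12
      have hcube : ‖u s - u t‖ ^ 3 ≤ ε * δ := by
        have hδ2 : δ ≤ Real.sqrt (ε / M^3) := (min_le_left _ _).trans (min_le_right _ _)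
        have hδsq : δ ^ 2 ≤ ε / M^3 := by
          have := Real.sq_sqrt (show (0:ℝ) ≤ ε / M^3 by positivity)
          nlinarith [Real.sqrt_nonneg (ε / M^3), hδpos.le]
        calc ‖u s - u t‖ ^ 3 ≤ (M * δ) ^ 3 :=
              pow_le_pow_left₀ (norm_nonneg _) hdM 3
          _ = M ^ 3 * δ ^ 2 * δ := by ring
          _ ≤ M ^ 3 * (ε / M^3) * δ := by
              apply mul_le_mul_of_nonneg_right _ hδpos.le
              exact mul_le_mul_of_nonneg_left hδsq (by positivity)
          _ = ε * δ := by field_simp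
      have htri : A s ≤ A t + Real.arccos ⟪u t, u s⟫ := by
        rw [hA]
        exact arccos_inner_triangle (hunit 0 (by simp [zero_le_one]))
          (hunit t ⟨ht0, by linarith⟩) (hunit s ⟨by linarith, hs1⟩)
      have htS : A t ≤ (1 + ε) * Λ t + ε * t := ht.1
      have hΛts : Λ t ≤ Λ s := hΛmono ht0 hts.le hs1
      rw [hS]
      simp only [mem_setOf_eq]
      have : A s ≤ (1 + ε) * Λ t + ε * t + (Λ s - Λ t) + ε * δ := by
        calc A s ≤ A t + Real.arccos ⟪u t, u s⟫ := htri
          _ ≤ A t + (‖u s - u t‖ + ‖u s - u t‖ ^ 3) := by linarith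
          _ ≤ (1 + ε) * Λ t + ε * t + (Λ s - Λ t) + ε * δ := by linarith
      have hse : ε * s = ε * t + ε * δ := by rw [hs]; ring
      nlinarith [mul_nonneg hε.le (sub_nonneg.2 hΛts)]
    have h1S : (1:ℝ) ∈ S := by
      have := IsClosed.Icc_subset_of_forall_exists_gt hscl h0S hstep
      exact this (right_mem_Icc.2 zero_le_one)
    have := h1S
    rw [hS] at this
    simpa using this
  -- conclude
  have hΛ1 : Λ 1 = ∫ t in (0:ℝ)..1, ‖U t‖ := rfl
  rw [← hΛ1]
  have hΛ1nn : 0 ≤ Λ 1 := by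
    have h := hΛmono le_rfl zero_le_one le_rfl
    have hΛ0 : Λ 0 = 0 := by rw [hΛ]; simp
    rw [hΛ]
    exact intervalIntegral.integral_nonneg zero_le_one (fun τ _ => norm_nonneg _)
  apply le_of_forall_pos_le_add
  intro ε' hε'
  have hden : 0 < Λ 1 + 1 := by linarith
  have hmain := main (ε' / (Λ 1 + 1)) (by positivity)
  have : (1 + ε' / (Λ 1 + 1)) * Λ 1 + ε' / (Λ 1 + 1) = Λ 1 + ε' / (Λ 1 + 1) * (Λ 1 + 1) := by
    ring
  rw [this] at hmain
  rw [div_mul_cancel₀] at hmain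
  · linarith
  · exact hden.ne'
lemma norm_comb {u w : E} (hu : ‖u‖ = 1) (hw : ‖w‖ = 1) (huw : ⟪u, w⟫ = 0)
    (p q : ℝ) : ‖p • u + q • w‖ = Real.sqrt (p ^ 2 + q ^ 2) := by
  have h2 : ‖p • u + q • w‖ ^ 2 = p ^ 2 + q ^ 2 := by
    rw [norm_add_sq_real, norm_smul, norm_smul, real_inner_smul_left, real_inner_smul_right,
      huw, hu, hw]
    simp [sq_abs]
  rw [← h2, Real.sqrt_sq (norm_nonneg _)]

lemma exists_orthonormal {n : ℕ} (hn : 2 ≤ n) (u : EuclideanSpace ℝ (Fin n)) (hu : ‖u‖ = 1) :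
    ∃ w : EuclideanSpace ℝ (Fin n), ‖w‖ = 1 ∧ ⟪u, w⟫ = 0 := by
  have hu0 : u ≠ 0 := by intro h; rw [h, norm_zero] at hu; norm_num at hu
  have hfin : Module.finrank ℝ (EuclideanSpace ℝ (Fin n)) = n := finrank_euclideanSpace_fin
  have hspan : Module.finrank ℝ (ℝ ∙ u) = 1 := finrank_span_singleton hu0
  have hsum := Submodule.finrank_add_finrank_orthogonal (K := (ℝ ∙ u))
  have hpos : 0 < Module.finrank ℝ ((ℝ ∙ u)ᗮ : Submodule ℝ (EuclideanSpace ℝ (Fin n))) := by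
    omega
  haveI := Module.nontrivial_of_finrank_pos hpos
  obtain ⟨w0, hw0⟩ := exists_ne (0 : ((ℝ ∙ u)ᗮ : Submodule ℝ (EuclideanSpace ℝ (Fin n))))
  have hw0' : (w0 : EuclideanSpace ℝ (Fin n)) ≠ 0 := fun h => hw0 (Subtype.ext h)
  refine ⟨‖(w0 : EuclideanSpace ℝ (Fin n))‖⁻¹ • w0, ?_, ?_⟩
  · rw [norm_smul, norm_inv, norm_norm, inv_mul_cancel₀ (norm_ne_zero_iff.2 hw0')]
  · rw [real_inner_smul_right]
    have := w0.2
    rw [Submodule.mem_orthogonal] at this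
    rw [this u (Submodule.mem_span_singleton_self u)]
    ring

lemma inner_qperp {a b : E} (ha : ‖a‖ = 1) : ⟪a, b - ⟪a, b⟫ • a⟫ = 0 := by
  rw [inner_sub_right, real_inner_smul_right, real_inner_self_eq_norm_sq, ha]
  ring

lemma comb_eq {F : Type*} [AddCommGroup F] [Module ℝ F] (u w : F) (Rt m A B C D : ℝ) :
    Rt • (A • u + B • w) + (Rt * m) • (C • u + D • w) =
      (Rt * A + Rt * m * C) • u + (Rt * B + Rt * m * D) • w := by
  simp only [smul_add, smul_smul]
  rw [add_smul, add_smul]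
  abel

lemma angle_eq_arccos {n : ℕ} {z x y : EuclideanSpace ℝ (Fin n)} (hx : x ≠ z) (hy : y ≠ z) :
    EuclideanGeometry.angle x z y =
      Real.arccos ⟪‖x - z‖⁻¹ • (x - z), ‖y - z‖⁻¹ • (y - z)⟫ := by
  rw [EuclideanGeometry.angle, vsub_eq_sub, vsub_eq_sub, InnerProductGeometry.angle]
  congr 1
  rw [real_inner_smul_left, real_inner_smul_right]
  rw [div_eq_mul_inv, mul_inv]
  ring

set_option maxHeartbeats 1000000 in
/-- The logarithmic spiral: upper bound curve. -/
lemma exists_spiral {n : ℕ} (hn : 2 ≤ n) (z x y : EuclideanSpace ℝ (Fin n))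
    (hx : x ≠ z) (hy : y ≠ z) :
    ∃ γ : ℝ → EuclideanSpace ℝ (Fin n), ContDiffOn ℝ 1 γ (Icc 0 1) ∧ γ 0 = x ∧ γ 1 = y ∧
      (∀ t ∈ Icc (0:ℝ) 1, γ t ≠ z) ∧
      ∀ t ∈ Icc (0:ℝ) 1, ‖γ t - z‖⁻¹ * ‖derivWithin γ (Icc 0 1) t‖ =
        Real.sqrt ((EuclideanGeometry.angle x z y) ^ 2 +
          (Real.log (‖x - z‖ / ‖y - z‖)) ^ 2) := by
  have hxz : x - z ≠ 0 := sub_ne_zero.2 hx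
  have hyz : y - z ≠ 0 := sub_ne_zero.2 hy
  set r0 : ℝ := ‖x - z‖ with hr0def
  set r1 : ℝ := ‖y - z‖ with hr1def
  have hr0 : 0 < r0 := norm_pos_iff.2 hxz
  have hr1 : 0 < r1 := norm_pos_iff.2 hyz
  set u0 : EuclideanSpace ℝ (Fin n) := r0⁻¹ • (x - z) with hu0def
  set v : EuclideanSpace ℝ (Fin n) := r1⁻¹ • (y - z) with hvdef
  have hu0 : ‖u0‖ = 1 := by
    rw [hu0def, norm_smul, norm_inv, norm_norm, ← hr0def, inv_mul_cancel₀ hr0.ne']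
  have hv : ‖v‖ = 1 := by
    rw [hvdef, norm_smul, norm_inv, norm_norm, ← hr1def, inv_mul_cancel₀ hr1.ne']
  set θ : ℝ := EuclideanGeometry.angle x z y with hθdef
  have hθ : θ = Real.arccos ⟪u0, v⟫ := angle_eq_arccos hx hy
  have hcos : Real.cos θ = ⟪u0, v⟫ := by
    rw [hθ]; exact Real.cos_arccos (neg_one_le_inner hu0 hv) (inner_le_one hu0 hv)
  have hsin : Real.sin θ = ‖v - ⟪u0, v⟫ • u0‖ := by
    rw [hθ, Real.sin_arccos, real_inner_comm v u0, ← norm_sub_proj hv hu0]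
  -- get w
  obtain ⟨w, hw1, hworth, hvw⟩ : ∃ w : EuclideanSpace ℝ (Fin n), ‖w‖ = 1 ∧ ⟪u0, w⟫ = 0 ∧
      v = Real.cos θ • u0 + Real.sin θ • w := by
    by_cases hq : v - ⟪u0, v⟫ • u0 = 0
    · obtain ⟨w, hw1, hworth⟩ := exists_orthonormal hn u0 hu0
      refine ⟨w, hw1, hworth, ?_⟩
      have hs0 : Real.sin θ = 0 := by rw [hsin, hq, norm_zero]
      rw [hs0, zero_smul, add_zero, hcos]
      rw [sub_eq_zero] at hq
      exact hq
    · refine ⟨‖v - ⟪u0, v⟫ • u0‖⁻¹ • (v - ⟪u0, v⟫ • u0), ?_, ?_, ?_⟩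
      · rw [norm_smul, norm_inv, norm_norm, inv_mul_cancel₀ (norm_ne_zero_iff.2 hq)]
      · rw [real_inner_smul_right u0 (v - ⟪u0, v⟫ • u0) _, inner_qperp hu0, mul_zero]
      · rw [hcos, hsin, smul_inv_smul₀ (norm_ne_zero_iff.2 hq)]
        abel
  -- the curve
  set m : ℝ := Real.log r1 - Real.log r0 with hmdef
  set R : ℝ → ℝ := fun t => Real.exp (Real.log r0 + t * m) with hRdef
  set e : ℝ → EuclideanSpace ℝ (Fin n) :=
    fun t => Real.cos (t * θ) • u0 + Real.sin (t * θ) • w with hedef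
  set γ : ℝ → EuclideanSpace ℝ (Fin n) := fun t => z + R t • e t with hγdef
  have hRpos : ∀ t, 0 < R t := fun t => Real.exp_pos _
  have hR0 : R 0 = r0 := by rw [hRdef]; simp [Real.exp_log hr0]
  have hR1 : R 1 = r1 := by
    rw [hRdef]; simp only [one_mul, hmdef]
    rw [show Real.log r0 + (Real.log r1 - Real.log r0) = Real.log r1 by ring,
      Real.exp_log hr1]
  have he0 : e 0 = u0 := by rw [hedef]; simp
  have he1 : e 1 = v := by rw [hedef]; simp only [one_mul]; exact hvw.symm
  have hγ0 : γ 0 = x := by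
    rw [hγdef]; simp only [hR0, he0, hu0def]
    rw [smul_inv_smul₀ hr0.ne', add_sub_cancel]
  have hγ1 : γ 1 = y := by
    rw [hγdef]; simp only [hR1, he1, hvdef]
    rw [smul_inv_smul₀ hr1.ne', add_sub_cancel]
  have henorm : ∀ t, ‖e t‖ = 1 := by
    intro t
    rw [hedef]
    simp only []
    rw [norm_comb hu0 hw1 hworth]
    rw [Real.cos_sq_add_sin_sq]
    exact Real.sqrt_one
  have hsub : ∀ t, γ t - z = R t • e t := by intro t; rw [hγdef]; simp
  have hγz : ∀ t, ‖γ t - z‖ = R t := by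
    intro t
    rw [hsub t, norm_smul, henorm, Real.norm_eq_abs, abs_of_pos (hRpos t), mul_one]
  -- smoothness
  have haffine : ContDiff ℝ 1 (fun t : ℝ => Real.log r0 + t * m) :=
    contDiff_const.add (contDiff_id.mul contDiff_const)
  have hRcd : ContDiff ℝ 1 R := Real.contDiff_exp.comp haffine
  have htθ : ContDiff ℝ 1 (fun t : ℝ => t * θ) := contDiff_id.mul contDiff_const
  have hecd : ContDiff ℝ 1 e :=
    ((Real.contDiff_cos.comp htθ).smul contDiff_const).add
      ((Real.contDiff_sin.comp htθ).smul contDiff_const)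
  have hγcd : ContDiff ℝ 1 γ := contDiff_const.add (hRcd.smul hecd)
  -- derivative
  have hderiv : ∀ t : ℝ, HasDerivAt γ
      (R t • ((-Real.sin (t * θ) * θ) • u0 + (Real.cos (t * θ) * θ) • w) +
        (R t * m) • e t) t := by
    intro t
    have h1 : HasDerivAt (fun s : ℝ => Real.log r0 + s * m) m t := by
      simpa using (hasDerivAt_mul_const m).const_add (Real.log r0)
    have hR' : HasDerivAt R (R t * m) t := by
      have := h1.exp
      simpa [hRdef] using this
    have hc : HasDerivAt (fun s : ℝ => Real.cos (s * θ)) (-Real.sin (t * θ) * θ) t :=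
      (hasDerivAt_mul_const θ).cos
    have hs : HasDerivAt (fun s : ℝ => Real.sin (s * θ)) (Real.cos (t * θ) * θ) t :=
      (hasDerivAt_mul_const θ).sin
    have he' : HasDerivAt e ((-Real.sin (t * θ) * θ) • u0 + (Real.cos (t * θ) * θ) • w) t :=
      (hc.smul_const u0).add (hs.smul_const w)
    have := (hR'.smul he').const_add z
    simpa [hγdef] using this
  refine ⟨γ, hγcd.contDiffOn, hγ0, hγ1, ?_, ?_⟩
  · intro t _
    intro h
    have := hγz t
    rw [h, sub_self, norm_zero] at this
    exact absurd this.symm (hRpos t).ne'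
  · intro t ht
    have hdw : derivWithin γ (Icc 0 1) t =
        R t • ((-Real.sin (t * θ) * θ) • u0 + (Real.cos (t * θ) * θ) • w) + (R t * m) • e t :=
      (hderiv t).hasDerivWithinAt.derivWithin (uniqueDiffOn_Icc one_pos t ht)
    rw [hdw, hγz t]
    have hcomb : R t • ((-Real.sin (t * θ) * θ) • u0 + (Real.cos (t * θ) * θ) • w) +
        (R t * m) • e t =
        (R t * (m * Real.cos (t * θ) - Real.sin (t * θ) * θ)) • u0 +
        (R t * (m * Real.sin (t * θ) + Real.cos (t * θ) * θ)) • w := by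
      have hee : e t = Real.cos (t * θ) • u0 + Real.sin (t * θ) • w := rfl
      rw [hee, comb_eq u0 w (R t) m (-Real.sin (t * θ) * θ) (Real.cos (t * θ) * θ)
        (Real.cos (t * θ)) (Real.sin (t * θ))]
      rw [show R t * (-Real.sin (t * θ) * θ) + R t * m * Real.cos (t * θ) =
        R t * (m * Real.cos (t * θ) - Real.sin (t * θ) * θ) from by ring]
      rw [show R t * (Real.cos (t * θ) * θ) + R t * m * Real.sin (t * θ) =
        R t * (m * Real.sin (t * θ) + Real.cos (t * θ) * θ) from by ring]
    rw [hcomb, norm_comb hu0 hw1 hworth]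
    have hsq : (R t * (m * Real.cos (t * θ) - Real.sin (t * θ) * θ)) ^ 2 +
        (R t * (m * Real.sin (t * θ) + Real.cos (t * θ) * θ)) ^ 2 =
        R t ^ 2 * (θ ^ 2 + m ^ 2) := by
      have h := Real.sin_sq_add_cos_sq (t * θ)
      linear_combination (R t ^ 2 * (m ^ 2 + θ ^ 2)) * h
    rw [hsq, Real.sqrt_mul (sq_nonneg _), Real.sqrt_sq (hRpos t).le]
    rw [← mul_assoc, inv_mul_cancel₀ (hRpos t).ne', one_mul]
    have hlog : Real.log (r0 / r1) = -m := by
      rw [Real.log_div hr0.ne' hr1.ne', hmdef]; ring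
    rw [hlog]
    congr 1
    ring

end QHAux

open QHAux

open Metric Set Real Filter intervalIntegral

set_option maxHeartbeats 2000000 in
/-- Martin–Osgood formula for the quasihyperbolic metric of the punctured
space: `k_{ℝⁿ∖{z}}(x,y) = √(θ² + log²(|x-z|/|y-z|))` with `θ = ∠(x,z,y)`. -/
theorem qhDist_punctured_formula {n : ℕ} (hn : 2 ≤ n)
    (z x y : EuclideanSpace ℝ (Fin n)) (hx : x ≠ z) (hy : y ≠ z) :
    qhDist ({z}ᶜ : Set (EuclideanSpace ℝ (Fin n))) x y =
      Real.sqrt ((EuclideanGeometry.angle x z y) ^ 2 +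
        (Real.log (‖x - z‖ / ‖y - z‖)) ^ 2) := by
  classical
  set K : ℝ := Real.sqrt ((EuclideanGeometry.angle x z y) ^ 2 +
      (Real.log (‖x - z‖ / ‖y - z‖)) ^ 2) with hKdef
  -- the density simplifies
  haveI : Nonempty (Fin n) := ⟨⟨0, by omega⟩⟩
  haveI : Nontrivial (EuclideanSpace ℝ (Fin n)) := by
    have h01 : (0:ℕ) < n := by omega
    refine ⟨EuclideanSpace.single ⟨0, h01⟩ (1:ℝ), 0, ?_⟩
    intro h
    have := congrArg (fun v => v ⟨0, h01⟩) h
    simp [EuclideanSpace.single] at this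
  have hfr : frontier ({z}ᶜ : Set (EuclideanSpace ℝ (Fin n))) = {z} := by
    haveI := Module.punctured_nhds_neBot ℝ (EuclideanSpace ℝ (Fin n)) z
    rw [frontier_compl, frontier, closure_singleton, interior_singleton, diff_empty]
  have hrho : ∀ w : EuclideanSpace ℝ (Fin n),
      (infDist w (frontier ({z}ᶜ : Set (EuclideanSpace ℝ (Fin n)))))⁻¹ = ‖w - z‖⁻¹ := by
    intro w; rw [hfr, infDist_singleton, dist_eq_norm]
  have h01 : (0:ℝ) ≤ 1 := zero_le_one
  have hUD : UniqueDiffOn ℝ (Icc (0:ℝ) 1) := uniqueDiffOn_Icc one_pos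
  -- Lower bound: every admissible curve has weighted length ≥ K
  have hlow : ∀ L ∈ { L : ℝ | ∃ γ : ℝ → EuclideanSpace ℝ (Fin n),
      ContDiffOn ℝ 1 γ (Icc 0 1) ∧ γ 0 = x ∧ γ 1 = y ∧
      (∀ t ∈ Icc (0:ℝ) 1, γ t ∈ ({z}ᶜ : Set (EuclideanSpace ℝ (Fin n)))) ∧
      L = ∫ t in (0:ℝ)..1, (fun w => (infDist w (frontier ({z}ᶜ :
        Set (EuclideanSpace ℝ (Fin n)))))⁻¹) (γ t) * ‖derivWithin γ (Icc 0 1) t‖ },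
      K ≤ L := by
    rintro L ⟨γ, hγC, hγ0, hγ1, hγD, hLeq⟩
    set g : ℝ → EuclideanSpace ℝ (Fin n) := derivWithin γ (Icc 0 1) with hgdef
    have hγcont : ContinuousOn γ (Icc 0 1) := hγC.continuousOn
    have hgcont : ContinuousOn g (Icc 0 1) := hγC.continuousOn_derivWithin hUD le_rfl
    have hne : ∀ t ∈ Icc (0:ℝ) 1, γ t - z ≠ 0 := fun t ht =>
      sub_ne_zero.2 (Set.mem_compl_singleton_iff.1 (hγD t ht))
    set r : ℝ → ℝ := fun t => ‖γ t - z‖ with hrdef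
    have hrpos : ∀ t ∈ Icc (0:ℝ) 1, 0 < r t := fun t ht => norm_pos_iff.2 (hne t ht)
    set u : ℝ → EuclideanSpace ℝ (Fin n) := fun t => (r t)⁻¹ • (γ t - z) with hudef
    set Rp : ℝ → ℝ := fun t => @inner ℝ _ _ (u t) (g t) with hRpdef
    set U : ℝ → EuclideanSpace ℝ (Fin n) := fun t => (r t)⁻¹ • (g t - Rp t • u t) with hUdef
    set a : ℝ → ℝ := fun t => (r t)⁻¹ * Rp t with hadef
    set b : ℝ → ℝ := fun t => ‖U t‖ with hbdef
    -- continuity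
    have hsubc : ContinuousOn (fun t => γ t - z) (Icc (0:ℝ) 1) := hγcont.sub continuousOn_const
    have hrc : ContinuousOn r (Icc (0:ℝ) 1) := hsubc.norm
    have hrinvc : ContinuousOn (fun t => (r t)⁻¹) (Icc (0:ℝ) 1) :=
      hrc.inv₀ (fun t ht => (hrpos t ht).ne')
    have huc : ContinuousOn u (Icc (0:ℝ) 1) := hrinvc.smul hsubc
    have hRpc : ContinuousOn Rp (Icc (0:ℝ) 1) := huc.inner hgcont
    have hUc : ContinuousOn U (Icc (0:ℝ) 1) :=
      hrinvc.smul (hgcont.sub (hRpc.smul huc))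
    have hac : ContinuousOn a (Icc (0:ℝ) 1) := hrinvc.mul hRpc
    have hbc : ContinuousOn b (Icc (0:ℝ) 1) := hUc.norm
    have hunit : ∀ t ∈ Icc (0:ℝ) 1, ‖u t‖ = 1 := by
      intro t ht
      show ‖(r t)⁻¹ • (γ t - z)‖ = 1
      rw [norm_smul, Real.norm_eq_abs, abs_of_pos (inv_pos.2 (hrpos t ht))]
      exact inv_mul_cancel₀ (hrpos t ht).ne'
    -- derivatives at interior points
    have hder : ∀ t ∈ Ioo (0:ℝ) 1, HasDerivAt γ (g t) t := by
      intro t ht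
      have hmem : Icc (0:ℝ) 1 ∈ nhds t := Icc_mem_nhds ht.1 ht.2
      have hda : DifferentiableAt ℝ γ t :=
        ((hγC.differentiableOn one_ne_zero) t (Ioo_subset_Icc_self ht)).differentiableAt hmem
      have hdd : g t = deriv γ t := derivWithin_of_mem_nhds hmem
      rw [hdd]
      exact hda.hasDerivAt
    have hinnerval : ∀ t, Rp t = (r t)⁻¹ * @inner ℝ _ _ (γ t - z) (g t) := by
      intro t
      show @inner ℝ _ _ ((r t)⁻¹ • (γ t - z)) (g t) = _
      rw [real_inner_smul_left]
    have hrd : ∀ t ∈ Ioo (0:ℝ) 1, HasDerivAt r (Rp t) t := by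
      intro t ht
      have ht' := Ioo_subset_Icc_self ht
      have hcder : HasDerivAt (fun s => γ s - z) (g t) t := (hder t ht).sub_const z
      have hq : HasDerivAt (fun s => @inner ℝ _ _ (γ s - z) (γ s - z))
          (@inner ℝ _ _ (γ t - z) (g t) + @inner ℝ _ _ (g t) (γ t - z)) t :=
        hcder.inner ℝ hcder
      have hqt : @inner ℝ _ _ (γ t - z) (γ t - z) ≠ 0 := by
        rw [real_inner_self_eq_norm_sq]
        exact pow_ne_zero 2 (norm_ne_zero_iff.2 (hne t ht'))
      have hsq := hq.sqrt hqt
      have hfun : r = fun s => Real.sqrt (@inner ℝ _ _ (γ s - z) (γ s - z)) := by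
        funext s
        rw [real_inner_self_eq_norm_sq, Real.sqrt_sq (norm_nonneg _)]
      rw [hfun]
      convert hsq using 1
      have hsr : Real.sqrt (@inner ℝ _ _ (γ t - z) (γ t - z)) = r t := by
        rw [real_inner_self_eq_norm_sq, Real.sqrt_sq (norm_nonneg _)]
      rw [hinnerval t, real_inner_comm (g t) (γ t - z), hsr]
      have := (hrpos t ht').ne'
      field_simp
      ring
    have hlogd : ∀ t ∈ Ioo (0:ℝ) 1, HasDerivAt (fun s => Real.log (r s)) (a t) t := by
      intro t ht
      have ht' := Ioo_subset_Icc_self ht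
      have := (hrd t ht).log (hrpos t ht').ne'
      simpa [hadef, mul_comm, div_eq_inv_mul] using this
    have hud : ∀ t ∈ Ioo (0:ℝ) 1, HasDerivAt u (U t) t := by
      intro t ht
      have ht' := Ioo_subset_Icc_self ht
      have hcder : HasDerivAt (fun s => γ s - z) (g t) t := (hder t ht).sub_const z
      have hrinv : HasDerivAt (fun s => (r s)⁻¹) (-(Rp t) / r t ^ 2) t :=
        (hrd t ht).inv (hrpos t ht').ne'
      have h2 := hrinv.smul hcder
      have h3 : U t = (r t)⁻¹ • g t + (-(Rp t) / r t ^ 2) • (γ t - z) := by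
        show (r t)⁻¹ • (g t - Rp t • u t) = _
        have hu' : u t = (r t)⁻¹ • (γ t - z) := rfl
        rw [hu', smul_sub, smul_smul, smul_smul, sub_eq_add_neg, ← neg_smul]
        congr 2
        have := (hrpos t ht').ne'
        field_simp
      rw [h3]
      exact h2
    -- pointwise identity for the integrand
    have hptwise : ∀ t ∈ Icc (0:ℝ) 1,
        (r t)⁻¹ * ‖g t‖ = Real.sqrt (a t ^ 2 + b t ^ 2) := by
      intro t ht
      have hgu : @inner ℝ _ _ (g t) (u t) = Rp t := real_inner_comm (u t) (g t) ▸ rfl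
      have hnormsub : ‖g t - Rp t • u t‖ ^ 2 = ‖g t‖ ^ 2 - Rp t ^ 2 := by
        rw [norm_sub_sq_real, real_inner_smul_right, hgu, norm_smul, Real.norm_eq_abs,
          hunit t ht, mul_one, sq_abs]
        ring
      have hb2 : b t ^ 2 = ((r t)⁻¹) ^ 2 * (‖g t‖ ^ 2 - Rp t ^ 2) := by
        show ‖(r t)⁻¹ • (g t - Rp t • u t)‖ ^ 2 = _
        rw [norm_smul, Real.norm_eq_abs, abs_of_pos (inv_pos.2 (hrpos t ht)), mul_pow, hnormsub]
      have hab : a t ^ 2 + b t ^ 2 = ((r t)⁻¹ * ‖g t‖) ^ 2 := by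
        have ha2 : a t ^ 2 = ((r t)⁻¹) ^ 2 * Rp t ^ 2 := by
          show ((r t)⁻¹ * Rp t) ^ 2 = _
          ring
        rw [ha2, hb2]
        ring
      rw [hab, Real.sqrt_sq (by positivity)]
    -- rewrite L
    have hLeq2 : L = ∫ t in (0:ℝ)..1, Real.sqrt (a t ^ 2 + b t ^ 2) := by
      rw [hLeq]
      apply intervalIntegral.integral_congr
      intro t ht
      rw [uIcc_of_le h01] at ht
      simp only []
      rw [hrho (γ t)]
      exact hptwise t ht
    -- Minkowski
    have hmink := minkowski_integral hac hbc
    -- the two integrals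
    have hIa : ∫ t in (0:ℝ)..1, a t = Real.log (r 1) - Real.log (r 0) :=
      intervalIntegral.integral_eq_sub_of_hasDeriv_right_of_le (f := fun s => Real.log (r s))
        h01 (hrc.log (fun t ht => (hrpos t ht).ne'))
        (fun t ht => (hlogd t ht).hasDerivWithinAt)
        ((hac.mono (by rw [uIcc_of_le h01])).intervalIntegrable)
    have hIb : Real.arccos (@inner ℝ _ _ (u 0) (u 1)) ≤ ∫ t in (0:ℝ)..1, b t :=
      arccos_le_length huc hUc hunit hud
    have hBnn : (0:ℝ) ≤ ∫ t in (0:ℝ)..1, b t :=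
      intervalIntegral.integral_nonneg h01 (fun t _ => norm_nonneg _)
    have hangle : EuclideanGeometry.angle x z y = Real.arccos (@inner ℝ _ _ (u 0) (u 1)) := by
      have hu0 : u 0 = ‖x - z‖⁻¹ • (x - z) := by
        show ‖γ 0 - z‖⁻¹ • (γ 0 - z) = _
        rw [hγ0]
      have hu1 : u 1 = ‖y - z‖⁻¹ • (y - z) := by
        show ‖γ 1 - z‖⁻¹ • (γ 1 - z) = _
        rw [hγ1]
      rw [hu0, hu1]
      exact angle_eq_arccos hx hy
    have hθB : EuclideanGeometry.angle x z y ≤ ∫ t in (0:ℝ)..1, b t := by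
      rw [hangle]; exact hIb
    have hθnn : 0 ≤ EuclideanGeometry.angle x z y := by
      rw [hangle]; exact Real.arccos_nonneg _
    have hlogsq : (Real.log (‖x - z‖ / ‖y - z‖)) ^ 2 = (∫ t in (0:ℝ)..1, a t) ^ 2 := by
      rw [hIa]
      have hr1 : r 1 = ‖y - z‖ := by show ‖γ 1 - z‖ = _; rw [hγ1]
      have hr0 : r 0 = ‖x - z‖ := by show ‖γ 0 - z‖ = _; rw [hγ0]
      rw [hr0, hr1, Real.log_div (norm_ne_zero_iff.2 (sub_ne_zero.2 hx))
        (norm_ne_zero_iff.2 (sub_ne_zero.2 hy))]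
      ring
    have hfin : K ≤ Real.sqrt ((∫ t in (0:ℝ)..1, a t) ^ 2 + (∫ t in (0:ℝ)..1, b t) ^ 2) := by
      rw [hKdef]
      apply Real.sqrt_le_sqrt
      have hsq : (EuclideanGeometry.angle x z y) ^ 2 ≤ (∫ t in (0:ℝ)..1, b t) ^ 2 :=
        pow_le_pow_left₀ hθnn hθB 2
      linarith [hlogsq]
    rw [hLeq2]
    exact hfin.trans hmink
  -- Upper bound : the spiral achieves K
  have hmem : K ∈ { L : ℝ | ∃ γ : ℝ → EuclideanSpace ℝ (Fin n),
      ContDiffOn ℝ 1 γ (Icc 0 1) ∧ γ 0 = x ∧ γ 1 = y ∧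
      (∀ t ∈ Icc (0:ℝ) 1, γ t ∈ ({z}ᶜ : Set (EuclideanSpace ℝ (Fin n)))) ∧
      K = ∫ t in (0:ℝ)..1, (fun w => (infDist w (frontier ({z}ᶜ :
        Set (EuclideanSpace ℝ (Fin n)))))⁻¹) (γ t) * ‖derivWithin γ (Icc 0 1) t‖ } := by
    obtain ⟨γ, hC, h0, h1, hD, hval⟩ := exists_spiral hn z x y hx hy
    refine ⟨γ, hC, h0, h1, fun t ht => Set.mem_compl_singleton_iff.2 (hD t ht), ?_⟩
    have : (∫ t in (0:ℝ)..1, (fun w => (infDist w (frontier ({z}ᶜ :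
        Set (EuclideanSpace ℝ (Fin n)))))⁻¹) (γ t) * ‖derivWithin γ (Icc 0 1) t‖) = K := by
      rw [intervalIntegral.integral_congr (g := fun _ => K) ?_]
      · simp
      · intro t ht
        rw [uIcc_of_le h01] at ht
        simp only []
        rw [hrho (γ t)]
        exact hval t ht
    exact this.symm
  -- conclude
  rw [qhDist, confDist]
  apply le_antisymm
  · exact csInf_le ⟨K, hlow⟩ hmem
  · exact le_csInf ⟨K, hmem⟩ hlow
end
end
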